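/- arXiv:1602.05423 — 2 statements merged into one kernel-verified Lean document; each statement's English description precedes it below -/
import Mathlib

section
/- Let η be a symmetric nondegenerate N×N complex matrix and f ∈ ℂ[[v^1,…,v^N]] a formal power series; let c_{αβγ} := ∂³f/∂v^α∂v^β∂v^γ and c_{αβγμ} := ∂⁴f/∂v^α∂v^β∂v^γ∂v^μ, and raise indices with η: c^{αμ}_μ := η^{αρ}η^{μσ}c_{ρσμ}, c^{μαβ}_μ := η^{μν}η^{αρ}η^{βσ}c_{μνρσ}. Consider the matrix of differential operators K_ṽ^{αβ} = η^{αβ}∂_x + (ε²/24)(c^{μαβ}_μ ∂_x³ + ∂_x³∘c^{μαβ}_μ − (∂_x² c^{μαβ}_μ)∂_x − ∂_x∘(∂_x² c^{μαβ}_μ)), where c-tensors are regarded as degree-0 differential polynomials in the variables ṽ and ∂_x acts as the total x-derivative. Then the Miura transformation ṽ^α ↦ u^α(ṽ) = ṽ^α − (ε²/24)∂_x² c^{αμ}_μ transforms K_ṽ into η∂_x modulo ε⁴: Σ_{p,q≥0} (∂u^α(ṽ)/∂ṽ^μ_p) ∂_x^p ∘ K_ṽ^{μν} ∘ (−∂_x)^q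 ∘ (∂u^β(ṽ)/∂ṽ^ν_q) = η^{αβ}∂_x + O(ε⁴), i.e. the ε⁰- and ε²-parts of the transformed operator are η^{αβ}∂_x and 0 respectively. -/
/-!
Common formal framework for the theory of differential polynomials, local
functionals and tau-structures, following Buryak–Dubrovin–Guéré–Rossi.

Variables of the algebra of differential polynomials: `Sum.inl (α, i)` stands
for `u^α_i` (with `u^α = u^α_0`) and `Sum.inr ()` stands for `ε`.  The paper's
index `1` (the unit direction) corresponds to `(0 : Fin N)` here.
-/

/-- The variables of the algebra of differential polynomials. -/
abbrev DVar (N : ℕ) : Type := (Fin N × ℕ) ⊕ Unit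

/-- The ring `Â_N` of (extended) differential polynomials, realized inside the
ring of formal power series in the variables `u^α_i` and `ε`. -/
abbrev DP (N : ℕ) : Type := MvPowerSeries (DVar N) ℂ

namespace DP

variable {N : ℕ}

/-- Coefficient of a monomial. -/
noncomputable def co (f : DP N) (m : DVar N →₀ ℕ) : ℂ :=
  MvPowerSeries.coeff (R := ℂ) m f

/-- Build a power series from its coefficients. -/
def ofCo (F : (DVar N →₀ ℕ) → ℂ) : DP N := F

/-- The variable `u^α_i`. -/
noncomputable def uv (α : Fin N) (i : ℕ) : DP N :=
  MvPowerSeries.X (Sum.inl (α, i))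

/-- The variable `ε`. -/
noncomputable def eps : DP N := MvPowerSeries.X (Sum.inr ())

/-- The partial derivative `∂/∂v` with respect to one of the variables. -/
noncomputable def pd (v : DVar N) (f : DP N) : DP N :=
  ofCo fun m => ((m v : ℂ) + 1) * co f (m + Finsupp.single v 1)

/-- The spatial derivative `∂_x = Σ_{α,i} u^α_{i+1} ∂/∂u^α_i`. -/
noncomputable def dx (f : DP N) : DP N :=
  ofCo fun m =>
    ∑ v ∈ m.support,
      (match v with
        | Sum.inl (α, i + 1) =>
            co (pd (Sum.inl (α, i)) f) (m - Finsupp.single (Sum.inl (α, i + 1)) 1)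
        | _ => (0 : ℂ))

/-- The variational derivative `δ/δu^μ = Σ_{i≥0} (−∂_x)^i ∘ ∂/∂u^μ_i`. -/
noncomputable def vd (μ : Fin N) (f : DP N) : DP N :=
  ofCo fun m => ∑ᶠ i : ℕ, ((-1 : ℂ) ^ i) * co (dx^[i] (pd (Sum.inl (μ, i)) f)) m

/-- The weighted degree of a monomial: `deg u^α_i = i`, `deg ε = −1`. -/
noncomputable def wdeg (m : DVar N →₀ ℕ) : ℤ :=
  ∑ v ∈ m.support,
    (match v with
      | Sum.inl (_, i) => (i : ℤ)
      | Sum.inr _ => (-1 : ℤ)) * (m v : ℤ)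

/-- Degree-`k` homogeneity (membership in `Â_N^{[k]}`). -/
def IsHomog (k : ℤ) (f : DP N) : Prop :=
  ∀ m, co f m ≠ 0 → wdeg m = k

/-- Being a constant, i.e. an element of `ℂ[[ε]]`. -/
def IsConst (f : DP N) : Prop :=
  ∀ m, co f m ≠ 0 → ∀ v ∈ m.support, v = Sum.inr ()

/-- Vanishing of the evaluation at `u^*_* = 0`. -/
def VanishAtU0 (f : DP N) : Prop :=
  ∀ k : ℕ, co f (Finsupp.single (Sum.inr ()) k) = 0

/-- Being a genuine differential polynomial: in each ε-degree at most `e`,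
polynomiality (bounded degree, boundedly many variables) in the jet
variables `u^α_i`, `i ≥ 1`. -/
def IsDiffPoly (f : DP N) : Prop :=
  ∀ e : ℕ, ∃ D : ℕ, ∀ m, co f m ≠ 0 → m (Sum.inr ()) ≤ e →
    ((∑ v ∈ m.support,
        (match v with
          | Sum.inl (_, _ + 1) => m v
          | _ => 0)) ≤ D) ∧
      ∀ (α : Fin N) (i : ℕ), D < i → m (Sum.inl (α, i)) = 0

/-- The submodule of constants `ℂ[[ε]] ⊆ Â_N`. -/
noncomputable def constSub (N : ℕ) : Submodule ℂ (DP N) where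
  carrier := {f | IsConst f}
  add_mem' := by
    intro f g hf hg m hm
    have hco : co (f + g) m = co f m + co g m := map_add _ _ _
    by_cases h1 : co f m = 0
    · have h2 : co g m ≠ 0 := by
        intro h2; exact hm (by rw [hco, h1, h2, add_zero])
      exact hg m h2
    · exact hf m h1
  zero_mem' := by
    intro m hm
    exact (hm (map_zero (MvPowerSeries.coeff (R := ℂ) m))).elim
  smul_mem' := by
    intro c f hf m hm
    have hne : co f m ≠ 0 := by
      intro h
      apply hm
      have hsm : co (c • f) m = c * co f m := by
        simp [co]
      rw [hsm, h, mul_zero]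
    exact hf m hne

/-- The submodule `ℂ[[ε]] + ∂_x(Â_N)` by which one quotients to get local
functionals. -/
noncomputable def lfSub (N : ℕ) : Submodule ℂ (DP N) :=
  constSub N ⊔ Submodule.span ℂ (Set.range (dx : DP N → DP N))

/-- The space `Λ̂_N` of local functionals. -/
abbrev LF (N : ℕ) := DP N ⧸ lfSub N

/-- The projection `f ↦ ∫ f dx`. -/
noncomputable def intg : DP N →ₗ[ℂ] LF N := (lfSub N).mkQ

/-- A choice of density for a local functional. -/
noncomputable def rep (h : LF N) : DP N :=
  (Submodule.Quotient.mk_surjective (lfSub N) h).choose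

/-- The variational derivative `δ/δu^μ` of a local functional. -/
noncomputable def vdQ (μ : Fin N) (h : LF N) : DP N := vd μ (rep h)

/-- The partial derivative `∂/∂v` of a local functional. -/
noncomputable def pdQ (v : DVar N) (h : LF N) : LF N := intg (pd v (rep h))

/-- The degree-`k` local functionals `Λ̂_N^{[k]}`. -/
noncomputable def LFHomog (N : ℕ) (k : ℤ) : Set (LF N) :=
  intg '' {f : DP N | IsHomog k f ∧ IsDiffPoly f}

/-- The operator `K = η ∂_x` applied to a tuple of differential polynomials. -/
noncomputable def etaAp (η : Matrix (Fin N) (Fin N) ℂ) (α : Fin N)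
    (g : Fin N → DP N) : DP N :=
  ∑ ν : Fin N, η α ν • dx (g ν)

/-- The bracket `{f̄, ḡ}_{η∂_x}` of local functionals. -/
noncomputable def lfbEta (η : Matrix (Fin N) (Fin N) ℂ) (f g : LF N) : LF N :=
  intg (∑ μ : Fin N, vdQ μ f * etaAp η μ fun ν => vdQ ν g)

/-- The bracket `{f, h̄}_{η∂_x}` of a differential polynomial with a local
functional. -/
noncomputable def pbEta (η : Matrix (Fin N) (Fin N) ℂ) (f : DP N) (h : LF N) : DP N :=
  ofCo fun m => ∑ γ : Fin N, ∑ᶠ n : ℕ,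
    co (pd (Sum.inl (γ, n)) f * dx^[n] (etaAp η γ fun μ => vdQ μ h)) m

/-- A general operator `K^{γν} = Σ_j K^{γν}_j ∂_x^j` applied to a tuple of
differential polynomials. -/
noncomputable def Kap (K : Fin N → Fin N → ℕ → DP N) (γ : Fin N)
    (g : Fin N → DP N) : DP N :=
  ∑ ν : Fin N, ofCo fun m => ∑ᶠ j : ℕ, co (K γ ν j * dx^[j] (g ν)) m

/-- The bracket `{f̄, ḡ}_K` of local functionals. -/
noncomputable def lfbK (K : Fin N → Fin N → ℕ → DP N) (f g : LF N) : LF N :=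
  intg (∑ μ : Fin N, vdQ μ f * Kap K μ fun ν => vdQ ν g)

/-- The bracket `{f, h̄}_K` of a differential polynomial with a local
functional. -/
noncomputable def pbK (K : Fin N → Fin N → ℕ → DP N) (f : DP N) (h : LF N) : DP N :=
  ofCo fun m => ∑ γ : Fin N, ∑ᶠ n : ℕ,
    co (pd (Sum.inl (γ, n)) f * dx^[n] (Kap K γ fun μ => vdQ μ h)) m

/-- Being a hamiltonian operator. -/
structure IsHamOp (K : Fin N → Fin N → ℕ → DP N) : Prop where
  finite : ∀ γ ν, ∃ J : ℕ, ∀ j, J ≤ j → K γ ν j = 0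
  deg : ∀ (γ ν : Fin N) (j : ℕ), IsHomog (1 - (j : ℤ)) (K γ ν j)
  poly : ∀ γ ν j, IsDiffPoly (K γ ν j)
  antisym : ∀ f g : LF N, lfbK K f g = -lfbK K g f
  jacobi : ∀ f g h : LF N,
    lfbK K (lfbK K f g) h + lfbK K (lfbK K g h) f + lfbK K (lfbK K h f) g = 0

/-- A hamiltonian hierarchy: a hamiltonian operator together with pairwise
commuting Hamiltonians `h̄_{β,q} ∈ Λ̂^{[0]}_N` such that `h̄_{1,0}` generates the
spatial translations. -/
structure IsHierarchy [NeZero N] (K : Fin N → Fin N → ℕ → DP N)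
    (H : Fin N → ℕ → LF N) : Prop where
  ham : IsHamOp K
  mem : ∀ β q, H β q ∈ LFHomog N 0
  comm : ∀ β q γ p, lfbK K (H β q) (H γ p) = 0
  transl : ∀ α, Kap K α (fun μ => vdQ μ (H 0 0)) = uv α 1

/-- A tau-structure for a hamiltonian hierarchy.  Here `h β q` denotes the
tau-symmetric density `h_{β,q-1}` (an index shift by one). -/
structure IsTauStructure [NeZero N] (K : Fin N → Fin N → ℕ → DP N)
    (H : Fin N → ℕ → LF N) (h : Fin N → ℕ → DP N) : Prop where
  mem : ∀ β q, IsHomog 0 (h β q) ∧ IsDiffPoly (h β q)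
  casimir : ∀ β α, Kap K α (fun μ => vdQ μ (intg (h β 0))) = 0
  indep : LinearIndependent ℂ fun β : Fin N => intg (h β 0)
  nondeg : Matrix.det (Matrix.of fun α β : Fin N => co (K α β 1) 0) ≠ 0
  dens : ∀ β q, intg (h β (q + 1)) = H β q
  tausym : ∀ α β p q, pbK K (h α p) (H β q) = pbK K (h β q) (H α p)

end DP



namespace DP

variable {N : ℕ}

/-- A formal power series in the variables `v^1, …, v^N` only (no jet
variables `v^α_i`, `i ≥ 1`, and no `ε`). -/
def OnlyV (f : DP N) : Prop :=
  ∀ m, co f m ≠ 0 → ∀ v ∈ m.support, ∃ α : Fin N, v = Sum.inl (α, 0)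

/-- Third derivative `c_{abc} = ∂³f/∂v^a∂v^b∂v^c`. -/
noncomputable def d3 (f : DP N) (a b c : Fin N) : DP N :=
  pd (Sum.inl (a, 0)) (pd (Sum.inl (b, 0)) (pd (Sum.inl (c, 0)) f))

/-- Fourth derivative `c_{abcd} = ∂⁴f/∂v^a∂v^b∂v^c∂v^d`. -/
noncomputable def d4 (f : DP N) (a b c d : Fin N) : DP N :=
  pd (Sum.inl (a, 0)) (d3 f b c d)

/-- `c^{αμ}_μ = η^{αρ}η^{μσ}c_{ρσμ}`. -/
noncomputable def cA (η : Matrix (Fin N) (Fin N) ℂ) (f : DP N) (α : Fin N) : DP N :=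
  ∑ ρ : Fin N, ∑ σ : Fin N, ∑ μ : Fin N, (η α ρ * η μ σ) • d3 f ρ σ μ

/-- `c^{μαβ}_μ = η^{μν}η^{αρ}η^{βσ}c_{μνρσ}`. -/
noncomputable def cB (η : Matrix (Fin N) (Fin N) ℂ) (f : DP N) (α β : Fin N) : DP N :=
  ∑ μ : Fin N, ∑ ν : Fin N, ∑ ρ : Fin N, ∑ σ : Fin N,
    (η μ ν * η α ρ * η β σ) • d4 f μ ν ρ σ

/-- The genus-one Dubrovin–Zhang operator
`K_ṽ^{αβ} = η^{αβ}∂_x + (ε²/24)(c^{μαβ}_μ ∂_x³ + ∂_x³∘c^{μαβ}_μ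
− (∂_x²c^{μαβ}_μ)∂_x − ∂_x∘(∂_x²c^{μαβ}_μ))`, acting on a differential
polynomial. -/
noncomputable def Kv (η : Matrix (Fin N) (Fin N) ℂ) (f : DP N) (α β : Fin N)
    (g : DP N) : DP N :=
  η α β • dx g + (24 : ℂ)⁻¹ • (eps ^ 2 *
    (cB η f α β * dx^[3] g + dx^[3] (cB η f α β * g)
      - dx^[2] (cB η f α β) * dx g - dx (dx^[2] (cB η f α β) * g)))

/-- The Miura transformation `ṽ^α ↦ u^α(ṽ) = ṽ^α − (ε²/24)∂_x²c^{αμ}_μ`. -/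
noncomputable def Uc (η : Matrix (Fin N) (Fin N) ℂ) (f : DP N) (α : Fin N) : DP N :=
  uv α 0 - (24 : ℂ)⁻¹ • (eps ^ 2 * dx^[2] (cA η f α))

/-- The transformed operator
`Σ_{p,q} (∂u^α/∂ṽ^μ_p) ∂_x^p ∘ K_ṽ^{μν} ∘ (−∂_x)^q ∘ (∂u^β/∂ṽ^ν_q)`. -/
noncomputable def KvT (η : Matrix (Fin N) (Fin N) ℂ) (f : DP N) (α β : Fin N)
    (g : DP N) : DP N :=
  ofCo fun m => ∑ᶠ p : ℕ, ∑ᶠ q : ℕ,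
    co (∑ μ : Fin N, ∑ ν : Fin N,
      pd (Sum.inl (μ, p)) (Uc η f α) *
        dx^[p] (Kv η f μ ν
          (((-1 : ℂ) ^ q) • dx^[q] (pd (Sum.inl (ν, q)) (Uc η f β) * g)))) m

end DP

namespace DP

variable {N : ℕ}

lemma co_ofCo (F : (DVar N →₀ ℕ) → ℂ) (m : DVar N →₀ ℕ) : co (ofCo F) m = F m := rfl

lemma co_add' (f g : DP N) (m : DVar N →₀ ℕ) : co (f + g) m = co f m + co g m :=
  map_add (MvPowerSeries.coeff (R := ℂ) m) f g

lemma co_sub' (f g : DP N) (m : DVar N →₀ ℕ) : co (f - g) m = co f m - co g m :=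
  map_sub (MvPowerSeries.coeff (R := ℂ) m) f g

lemma co_neg' (f : DP N) (m : DVar N →₀ ℕ) : co (-f) m = -co f m :=
  map_neg (MvPowerSeries.coeff (R := ℂ) m) f

lemma co_smul' (c : ℂ) (f : DP N) (m : DVar N →₀ ℕ) : co (c • f) m = c * co f m := by
  simp [co]

lemma co_zero' (m : DVar N →₀ ℕ) : co (0 : DP N) m = 0 :=
  map_zero (MvPowerSeries.coeff (R := ℂ) m)

lemma co_sum' {ι : Type*} (s : Finset ι) (f : ι → DP N) (m : DVar N →₀ ℕ) :
    co (∑ i ∈ s, f i) m = ∑ i ∈ s, co (f i) m :=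
  map_sum (MvPowerSeries.coeff (R := ℂ) m) f s

lemma co_mul' (f g : DP N) (m : DVar N →₀ ℕ) :
    co (f * g) m = ∑ p ∈ Finset.HasAntidiagonal.antidiagonal m, co f p.1 * co g p.2 :=
  MvPowerSeries.coeff_mul m f g

lemma co_pd (v : DVar N) (f : DP N) (m : DVar N →₀ ℕ) :
    co (pd v f) m = ((m v : ℂ) + 1) * co f (m + Finsupp.single v 1) := rfl

lemma dp_ext {f g : DP N} (h : ∀ m, co f m = co g m) : f = g :=
  MvPowerSeries.ext h

lemma pd_add (v : DVar N) (f g : DP N) : pd v (f + g) = pd v f + pd v g := by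
  refine dp_ext fun m => ?_
  rw [co_add', co_pd, co_pd, co_pd, co_add']; ring

lemma pd_sub (v : DVar N) (f g : DP N) : pd v (f - g) = pd v f - pd v g := by
  refine dp_ext fun m => ?_
  rw [co_sub', co_pd, co_pd, co_pd, co_sub']; ring

lemma pd_smul (v : DVar N) (c : ℂ) (f : DP N) : pd v (c • f) = c • pd v f := by
  refine dp_ext fun m => ?_
  rw [co_smul', co_pd, co_pd, co_smul']; ring

lemma pd_zero (v : DVar N) : pd v (0 : DP N) = 0 := by
  refine dp_ext fun m => ?_
  rw [co_pd, co_zero', co_zero']; ring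

lemma pd_sum {ι : Type*} (v : DVar N) (s : Finset ι) (f : ι → DP N) :
    pd v (∑ i ∈ s, f i) = ∑ i ∈ s, pd v (f i) := by
  refine dp_ext fun m => ?_
  rw [co_pd, co_sum', co_sum']
  simp only [co_pd]
  rw [Finset.mul_sum]

/-- Key reindexing lemma for the Leibniz rule. -/
lemma shift_sum (v : DVar N) (m : DVar N →₀ ℕ) (F : (DVar N →₀ ℕ) → (DVar N →₀ ℕ) → ℂ) :
    ∑ p ∈ Finset.HasAntidiagonal.antidiagonal m,
        (((p.1 : DVar N →₀ ℕ) v : ℂ) + 1) * F (p.1 + Finsupp.single v 1) p.2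
      = ∑ p ∈ Finset.HasAntidiagonal.antidiagonal (m + Finsupp.single v 1),
          ((p.1 : DVar N →₀ ℕ) v : ℂ) * F p.1 p.2 := by
  set δ : DVar N →₀ ℕ := Finsupp.single v 1 with hδ
  refine Finset.sum_bij_ne_zero (fun p _ _ => (p.1 + δ, p.2)) ?_ ?_ ?_ ?_
  · intro p hp _
    rw [Finset.HasAntidiagonal.mem_antidiagonal] at hp ⊢
    rw [add_right_comm, hp]
  · intro p₁ h₁₁ h₁₂ p₂ h₂₁ h₂₂ h
    simp only [Prod.mk.injEq] at h
    exact Prod.ext (add_right_cancel h.1) h.2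
  · intro q hq hq0
    rw [Finset.HasAntidiagonal.mem_antidiagonal] at hq
    have hqv : q.1 v ≠ 0 := by
      intro h; apply hq0; rw [h]; simp
    have hle : δ ≤ q.1 := by
      rw [hδ, Finsupp.single_le_iff]
      exact Nat.one_le_iff_ne_zero.mpr hqv
    refine ⟨(q.1 - δ, q.2), ?_, ?_, ?_⟩
    · rw [Finset.HasAntidiagonal.mem_antidiagonal]
      have : q.1 - δ + q.2 + δ = m + δ := by
        rw [add_right_comm, tsub_add_cancel_of_le hle, hq]
      exact add_right_cancel this
    · intro h
      apply hq0
      have h1 : ((q.1 - δ) v : ℂ) + 1 = (q.1 v : ℂ) := by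
        have : (q.1 - δ) v + 1 = q.1 v := by
          have := (Finsupp.tsub_apply q.1 δ v)
          rw [this, hδ, Finsupp.single_eq_same]
          omega
        rw [← this]; push_cast; ring
      rw [← h1]
      have h2 : q.1 - δ + δ = q.1 := tsub_add_cancel_of_le hle
      rw [← h2] at h ⊢
      simpa using h
    · exact Prod.ext (tsub_add_cancel_of_le hle) rfl
  · intro p h₁ h₂
    have : ((p.1 + δ) v : ℂ) = (p.1 v : ℂ) + 1 := by
      rw [Finsupp.add_apply, hδ, Finsupp.single_eq_same]; push_cast; ring
    rw [this]

lemma pd_mul (v : DVar N) (f g : DP N) : pd v (f * g) = pd v f * g + f * pd v g := by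
  refine dp_ext fun m => ?_
  set δ : DVar N →₀ ℕ := Finsupp.single v 1 with hδ
  rw [co_pd, co_mul', co_add', co_mul', co_mul']
  simp only [co_pd]
  have key : ∀ p ∈ Finset.HasAntidiagonal.antidiagonal (m + δ), ((m v : ℂ) + 1) = (p.1 v : ℂ) + (p.2 v : ℂ) := by
    intro p hp
    rw [Finset.HasAntidiagonal.mem_antidiagonal] at hp
    have := congrArg (fun x => x v) hp
    simp only [Finsupp.add_apply, hδ, Finsupp.single_eq_same] at this
    have h' : ((p.1 v + p.2 v : ℕ) : ℂ) = ((m v + 1 : ℕ) : ℂ) := by rw [this]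
    push_cast at h'
    exact h'.symm
  rw [Finset.mul_sum]
  rw [Finset.sum_congr rfl fun p hp => by rw [key p hp]]
  have split : ∑ p ∈ Finset.HasAntidiagonal.antidiagonal (m + δ), ((p.1 v : ℂ) + (p.2 v : ℂ)) * (co f p.1 * co g p.2)
      = (∑ p ∈ Finset.HasAntidiagonal.antidiagonal (m + δ), (p.1 v : ℂ) * (co f p.1 * co g p.2))
        + ∑ p ∈ Finset.HasAntidiagonal.antidiagonal (m + δ), (p.2 v : ℂ) * (co f p.1 * co g p.2) := by
    rw [← Finset.sum_add_distrib]
    exact Finset.sum_congr rfl fun p _ => by ring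
  rw [split]
  have h1 : ∑ p ∈ Finset.HasAntidiagonal.antidiagonal (m + δ), (p.1 v : ℂ) * (co f p.1 * co g p.2)
      = ∑ p ∈ Finset.HasAntidiagonal.antidiagonal m, ((p.1 v : ℂ) + 1) * (co f (p.1 + δ) * co g p.2) :=
    (shift_sum v m fun a b => co f a * co g b).symm
  have h2 : ∑ p ∈ Finset.HasAntidiagonal.antidiagonal (m + δ), (p.2 v : ℂ) * (co f p.1 * co g p.2)
      = ∑ p ∈ Finset.HasAntidiagonal.antidiagonal m, ((p.2 v : ℂ) + 1) * (co f p.1 * co g (p.2 + δ)) := by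
    rw [← Finsupp.sum_antidiagonal_swap (m + δ) fun a b => (a v : ℂ) * (co f b * co g a)]
    rw [← shift_sum v m fun a b => co f b * co g a]
    rw [Finsupp.sum_antidiagonal_swap m fun a b => ((a v : ℂ) + 1) * (co f b * co g (a + δ))]
  rw [h1, h2]
  congr 1
  · refine Finset.sum_congr rfl fun p _ => ?_; ring
  · refine Finset.sum_congr rfl fun p _ => ?_; ring

lemma pd_comm (v w : DVar N) (f : DP N) : pd v (pd w f) = pd w (pd v f) := by
  refine dp_ext fun m => ?_
  rw [co_pd, co_pd, co_pd, co_pd]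
  have harg : m + Finsupp.single v 1 + Finsupp.single w 1
      = m + Finsupp.single w 1 + Finsupp.single v 1 := add_right_comm _ _ _
  rw [harg]
  by_cases h : v = w
  · subst h
    rfl
  · have h1 : (m + Finsupp.single v 1 : DVar N →₀ ℕ) w = m w := by
      rw [Finsupp.add_apply, Finsupp.single_eq_of_ne' h, add_zero]
    have h2 : (m + Finsupp.single w 1 : DVar N →₀ ℕ) v = m v := by
      rw [Finsupp.add_apply, Finsupp.single_eq_of_ne' (Ne.symm h), add_zero]
    rw [h1, h2]; ring


/-! ### The spatial derivative `dx` -/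

/-- The finite set of jet indices relevant to the monomial `m`. -/
noncomputable def sIdx (m : DVar N →₀ ℕ) : Finset (Fin N × ℕ) :=
  m.support.biUnion fun v => match v with
    | Sum.inl (α, i + 1) => {(α, i)}
    | _ => ∅

lemma mem_sIdx {m : DVar N →₀ ℕ} {w : Fin N × ℕ} :
    w ∈ sIdx m ↔ Sum.inl (w.1, w.2 + 1) ∈ m.support := by
  constructor
  · intro hw
    rw [sIdx, Finset.mem_biUnion] at hw
    obtain ⟨v, hv, hw⟩ := hw
    obtain (⟨α, (_ | i)⟩ | u) := v
    · simp at hw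
    · simp only [Finset.mem_singleton] at hw
      subst hw; exact hv
    · simp at hw
  · intro h
    rw [sIdx, Finset.mem_biUnion]
    exact ⟨Sum.inl (w.1, w.2 + 1), h, by simp⟩

lemma sIdx_mono {p m : DVar N →₀ ℕ} (h : p ≤ m) : sIdx p ⊆ sIdx m := by
  intro w hw
  rw [mem_sIdx] at hw ⊢
  rw [Finsupp.mem_support_iff] at hw ⊢
  have := h (Sum.inl (w.1, w.2 + 1))
  omega

lemma co_uv_mul (α : Fin N) (i : ℕ) (h : DP N) (m : DVar N →₀ ℕ) :
    co (uv α i * h) m = if Finsupp.single (Sum.inl (α, i) : DVar N) 1 ≤ m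
      then co h (m - Finsupp.single (Sum.inl (α, i)) 1) else 0 := by
  rw [uv, MvPowerSeries.X_def, co, MvPowerSeries.coeff_monomial_mul]
  split <;> simp [co]

lemma uv_mul_supp {w : Fin N × ℕ} {h : DP N} {m : DVar N →₀ ℕ}
    (hne : co (uv w.1 (w.2 + 1) * h) m ≠ 0) : w ∈ sIdx m := by
  rw [co_uv_mul] at hne
  rw [mem_sIdx, Finsupp.mem_support_iff]
  by_cases hle : Finsupp.single (Sum.inl (w.1, w.2 + 1) : DVar N) 1 ≤ m
  · have := Finsupp.single_le_iff.mp hle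
    omega
  · exact absurd (if_neg hle) hne

lemma co_dx (f : DP N) (m : DVar N →₀ ℕ) :
    co (dx f) m = ∑ w ∈ sIdx m, co (uv w.1 (w.2 + 1) * pd (Sum.inl w) f) m := by
  have hdisj : (↑m.support : Set (DVar N)).PairwiseDisjoint
      (fun v => match v with
        | Sum.inl (α, i + 1) => ({(α, i)} : Finset (Fin N × ℕ))
        | _ => ∅) := by
    intro v₁ _ v₂ _ hne
    obtain (⟨α₁, (_ | i₁)⟩ | u₁) := v₁ <;> obtain (⟨α₂, (_ | i₂)⟩ | u₂) := v₂ <;>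
      simp only [Function.onFun] <;>
      try first
        | exact Finset.disjoint_empty_left _
        | exact Finset.disjoint_empty_right _
    rw [Finset.disjoint_singleton]
    intro h
    injection h with h1 h2
    subst h1; subst h2
    exact hne rfl
  have : co (dx f) m = ∑ v ∈ m.support,
      (match v with
        | Sum.inl (α, i + 1) =>
            co (pd (Sum.inl (α, i)) f) (m - Finsupp.single (Sum.inl (α, i + 1)) 1)
        | _ => (0 : ℂ)) := rfl
  rw [this, sIdx, Finset.sum_biUnion hdisj]
  refine Finset.sum_congr rfl fun v hv => ?_
  obtain (⟨α, (_ | i)⟩ | u) := v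
  · simp
  · rw [Finset.sum_singleton]
    dsimp only
    rw [co_uv_mul]
    rw [Finsupp.mem_support_iff] at hv
    rw [if_pos (Finsupp.single_le_iff.mpr (by omega))]
  · simp

lemma dx_add (f g : DP N) : dx (f + g) = dx f + dx g := by
  refine dp_ext fun m => ?_
  rw [co_add', co_dx, co_dx, co_dx, ← Finset.sum_add_distrib]
  refine Finset.sum_congr rfl fun w _ => ?_
  rw [pd_add, mul_add, co_add']

lemma dx_smul (c : ℂ) (f : DP N) : dx (c • f) = c • dx f := by
  refine dp_ext fun m => ?_
  rw [co_smul', co_dx, co_dx, Finset.mul_sum]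
  refine Finset.sum_congr rfl fun w _ => ?_
  rw [pd_smul, mul_smul_comm, co_smul']

lemma dx_zero : dx (0 : DP N) = 0 := by
  refine dp_ext fun m => ?_
  rw [co_zero', co_dx]
  refine Finset.sum_eq_zero fun w _ => ?_
  rw [pd_zero, mul_zero, co_zero']

lemma dx_sub (f g : DP N) : dx (f - g) = dx f - dx g := by
  refine dp_ext fun m => ?_
  rw [co_sub', co_dx, co_dx, co_dx, ← Finset.sum_sub_distrib]
  refine Finset.sum_congr rfl fun w _ => ?_
  rw [pd_sub, mul_sub, co_sub']

lemma dx_sum {ι : Type*} (s : Finset ι) (f : ι → DP N) :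
    dx (∑ i ∈ s, f i) = ∑ i ∈ s, dx (f i) := by
  classical
  induction s using Finset.induction_on with
  | empty => simpa using dx_zero
  | @insert _ _ hnotmem ih =>
      rw [Finset.sum_insert hnotmem, Finset.sum_insert hnotmem, dx_add, ih]

lemma co_dx_mul_left (f g : DP N) (m : DVar N →₀ ℕ) :
    co (dx f * g) m = ∑ w ∈ sIdx m, co ((uv w.1 (w.2 + 1) * pd (Sum.inl w) f) * g) m := by
  rw [co_mul']
  have step : ∀ p ∈ Finset.HasAntidiagonal.antidiagonal m, co (dx f) p.1 * co g p.2
      = ∑ w ∈ sIdx m, co (uv w.1 (w.2 + 1) * pd (Sum.inl w) f) p.1 * co g p.2 := by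
    intro p hp
    rw [Finset.HasAntidiagonal.mem_antidiagonal] at hp
    have hle : p.1 ≤ m := by rw [← hp]; exact le_self_add
    rw [co_dx, Finset.sum_mul]
    refine Finset.sum_subset (sIdx_mono hle) fun w _ hw => ?_
    have : co (uv w.1 (w.2 + 1) * pd (Sum.inl w) f) p.1 = 0 := by
      by_contra hne
      exact hw (uv_mul_supp hne)
    rw [this, zero_mul]
  rw [Finset.sum_congr rfl step, Finset.sum_comm]
  refine Finset.sum_congr rfl fun w _ => ?_
  rw [co_mul']

lemma co_mul_dx_right (f g : DP N) (m : DVar N →₀ ℕ) :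
    co (f * dx g) m = ∑ w ∈ sIdx m, co (f * (uv w.1 (w.2 + 1) * pd (Sum.inl w) g)) m := by
  rw [co_mul']
  have step : ∀ p ∈ Finset.HasAntidiagonal.antidiagonal m, co f p.1 * co (dx g) p.2
      = ∑ w ∈ sIdx m, co f p.1 * co (uv w.1 (w.2 + 1) * pd (Sum.inl w) g) p.2 := by
    intro p hp
    rw [Finset.HasAntidiagonal.mem_antidiagonal] at hp
    have hle : p.2 ≤ m := by
      rw [← hp]; exact le_add_self
    rw [co_dx, Finset.mul_sum]
    refine Finset.sum_subset (sIdx_mono hle) fun w _ hw => ?_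
    have : co (uv w.1 (w.2 + 1) * pd (Sum.inl w) g) p.2 = 0 := by
      by_contra hne
      exact hw (uv_mul_supp hne)
    rw [this, mul_zero]
  rw [Finset.sum_congr rfl step, Finset.sum_comm]
  refine Finset.sum_congr rfl fun w _ => ?_
  rw [co_mul']

lemma dx_mul (f g : DP N) : dx (f * g) = dx f * g + f * dx g := by
  refine dp_ext fun m => ?_
  rw [co_add', co_dx, co_dx_mul_left, co_mul_dx_right, ← Finset.sum_add_distrib]
  refine Finset.sum_congr rfl fun w _ => ?_
  rw [pd_mul, mul_add, co_add', ← mul_assoc, mul_left_comm (uv w.1 (w.2 + 1)) f]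

lemma pd_X (v w : DVar N) :
    pd v (MvPowerSeries.X w : DP N) = if v = w then 1 else 0 := by
  refine dp_ext fun m => ?_
  rw [co_pd]
  have hX : co (MvPowerSeries.X w : DP N) (m + Finsupp.single v 1)
      = if m + Finsupp.single v 1 = Finsupp.single w 1 then 1 else 0 :=
    MvPowerSeries.coeff_X _ _
  rw [hX]
  by_cases hvw : v = w
  · subst hvw
    have : (m + Finsupp.single v 1 = Finsupp.single v 1) ↔ m = 0 := add_eq_right
    rw [if_pos rfl]
    by_cases hm : m = 0
    · subst hm
      rw [if_pos (this.mpr rfl)]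
      have : co (1 : DP N) (0 : DVar N →₀ ℕ) = 1 := by
        rw [co]; simpa using MvPowerSeries.coeff_one (σ := DVar N) (R := ℂ) (0 : DVar N →₀ ℕ)
      rw [this]; simp
    · rw [if_neg (fun h => hm (this.mp h))]
      have : co (1 : DP N) m = 0 := by
        rw [co]
        have h1 := MvPowerSeries.coeff_one (σ := DVar N) (R := ℂ) m
        rw [h1, if_neg hm]
      rw [this]; simp
  · rw [if_neg hvw]
    have hne : m + Finsupp.single v 1 ≠ Finsupp.single w 1 := by
      intro h
      have := congrArg (fun x => x v) h
      simp only [Finsupp.add_apply, Finsupp.single_eq_same,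
        Finsupp.single_eq_of_ne' (Ne.symm hvw)] at this
      omega
    rw [if_neg hne, co_zero', mul_zero]

lemma pd_one (v : DVar N) : pd v (1 : DP N) = 0 := by
  refine dp_ext fun m => ?_
  rw [co_pd, co_zero']
  have : co (1 : DP N) (m + Finsupp.single v 1) = 0 := by
    rw [co]
    have h1 := MvPowerSeries.coeff_one (σ := DVar N) (R := ℂ) (m + Finsupp.single v 1)
    rw [h1, if_neg ?_]
    intro h
    have := congrArg (fun x => x v) h
    simp [Finsupp.add_apply, Finsupp.single_eq_same] at this
  rw [this, mul_zero]

lemma dx_one : dx (1 : DP N) = 0 := by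
  refine dp_ext fun m => ?_
  rw [co_dx, co_zero']
  refine Finset.sum_eq_zero fun w _ => ?_
  rw [pd_one, mul_zero, co_zero']

lemma pd_uv (v : DVar N) (α : Fin N) (i : ℕ) :
    pd v (uv α i : DP N) = if v = Sum.inl (α, i) then 1 else 0 :=
  pd_X v (Sum.inl (α, i))

lemma dx_eps : dx (eps : DP N) = 0 := by
  refine dp_ext fun m => ?_
  rw [co_dx, co_zero']
  refine Finset.sum_eq_zero fun w _ => ?_
  have : pd (Sum.inl w : DVar N) (eps : DP N) = 0 := by
    rw [eps, pd_X, if_neg (by simp)]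
  rw [this, mul_zero, co_zero']

lemma co_pd_dx (u : DVar N) (h : DP N) (m : DVar N →₀ ℕ) :
    co (pd u (dx h)) m
      = co (dx (pd u h)) m
        + ∑ w ∈ sIdx (m + Finsupp.single u 1),
            (if u = Sum.inl (w.1, w.2 + 1) then co (pd (Sum.inl w) h) m else 0) := by
  rw [co_pd, co_dx, Finset.mul_sum]
  have step : ∀ w ∈ sIdx (m + Finsupp.single u 1),
      ((m u : ℂ) + 1) * co (uv w.1 (w.2 + 1) * pd (Sum.inl w) h) (m + Finsupp.single u 1)
        = (if u = Sum.inl (w.1, w.2 + 1) then co (pd (Sum.inl w) h) m else 0)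
          + co (uv w.1 (w.2 + 1) * pd (Sum.inl w) (pd u h)) m := by
    intro w _
    have h1 : ((m u : ℂ) + 1) * co (uv w.1 (w.2 + 1) * pd (Sum.inl w) h) (m + Finsupp.single u 1)
        = co (pd u (uv w.1 (w.2 + 1) * pd (Sum.inl w) h)) m := (co_pd _ _ _).symm
    rw [h1, pd_mul, co_add']
    congr 1
    · rw [uv, pd_X]
      split_ifs with hc
      · rw [one_mul]
      · rw [zero_mul, co_zero']
    · rw [pd_comm]
  rw [Finset.sum_congr rfl step, Finset.sum_add_distrib]
  rw [add_comm]
  congr 1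
  rw [co_dx]
  refine (Finset.sum_subset (sIdx_mono le_self_add) fun w _ hw => ?_).symm
  by_contra hne
  exact hw (uv_mul_supp hne)

lemma pd_dx_zero (μ : Fin N) (h : DP N) :
    pd (Sum.inl (μ, 0)) (dx h) = dx (pd (Sum.inl (μ, 0)) h) := by
  refine dp_ext fun m => ?_
  rw [co_pd_dx]
  have : ∑ w ∈ sIdx (m + Finsupp.single (Sum.inl (μ, 0)) 1),
      (if (Sum.inl (μ, 0) : DVar N) = Sum.inl (w.1, w.2 + 1)
        then co (pd (Sum.inl w) h) m else 0) = 0 :=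
    Finset.sum_eq_zero fun w _ => if_neg (by simp)
  rw [this, add_zero]

lemma pd_dx_succ (μ : Fin N) (p : ℕ) (h : DP N) :
    pd (Sum.inl (μ, p + 1)) (dx h)
      = dx (pd (Sum.inl (μ, p + 1)) h) + pd (Sum.inl (μ, p)) h := by
  refine dp_ext fun m => ?_
  rw [co_add', co_pd_dx]
  congr 1
  have hcond : ∀ w : Fin N × ℕ,
      ((Sum.inl (μ, p + 1) : DVar N) = Sum.inl (w.1, w.2 + 1)) ↔ w = (μ, p) := by
    intro w
    constructor
    · intro hw
      simp only [Sum.inl.injEq, Prod.mk.injEq] at hw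
      exact Prod.ext hw.1.symm (by omega)
    · intro hw; subst hw; rfl
  have : ∀ w ∈ sIdx (m + Finsupp.single (Sum.inl (μ, p + 1)) 1),
      (if (Sum.inl (μ, p + 1) : DVar N) = Sum.inl (w.1, w.2 + 1)
        then co (pd (Sum.inl w) h) m else 0)
      = (if w = ((μ, p) : Fin N × ℕ) then co (pd (Sum.inl w) h) m else 0) := by
    intro w _
    rw [if_congr (hcond w) rfl rfl]
  rw [Finset.sum_congr rfl this, Finset.sum_ite_eq']
  rw [if_pos]
  rw [mem_sIdx, Finsupp.mem_support_iff]
  simp [Finsupp.add_apply, Finsupp.single_eq_same]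

/-! ### Iterates of `dx`, `eps` factors -/

lemma dx_iter_zero (n : ℕ) : dx^[n] (0 : DP N) = 0 := by
  induction n with
  | zero => rfl
  | succ n ih => simp only [Function.iterate_succ_apply]; rw [dx_zero, ih]

lemma dx_iter_add (n : ℕ) (f g : DP N) : dx^[n] (f + g) = dx^[n] f + dx^[n] g := by
  induction n generalizing f g with
  | zero => rfl
  | succ n ih => simp only [Function.iterate_succ_apply]; rw [dx_add, ih]

lemma dx_iter_sub (n : ℕ) (f g : DP N) : dx^[n] (f - g) = dx^[n] f - dx^[n] g := by
  induction n generalizing f g with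
  | zero => rfl
  | succ n ih => simp only [Function.iterate_succ_apply]; rw [dx_sub, ih]

lemma dx_iter_smul (n : ℕ) (c : ℂ) (f : DP N) : dx^[n] (c • f) = c • dx^[n] f := by
  induction n generalizing f with
  | zero => rfl
  | succ n ih => simp only [Function.iterate_succ_apply]; rw [dx_smul, ih]

lemma dx_iter_sum {ι : Type*} (n : ℕ) (s : Finset ι) (f : ι → DP N) :
    dx^[n] (∑ i ∈ s, f i) = ∑ i ∈ s, dx^[n] (f i) := by
  induction n generalizing f with
  | zero => rfl
  | succ n ih => simp only [Function.iterate_succ_apply]; rw [dx_sum, ih]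

lemma pd_inl_eps (w : Fin N × ℕ) : pd (Sum.inl w) (eps : DP N) = 0 := by
  rw [eps, pd_X, if_neg (by simp)]

lemma pd_eps2 (w : Fin N × ℕ) (x : DP N) :
    pd (Sum.inl w) (eps ^ 2 * x) = eps ^ 2 * pd (Sum.inl w) x := by
  have h2 : (eps : DP N) ^ 2 = eps * eps := sq eps
  rw [h2, mul_assoc, pd_mul, pd_inl_eps, zero_mul, zero_add, pd_mul, pd_inl_eps,
    zero_mul, zero_add, mul_assoc]

lemma dx_eps2 (x : DP N) : dx (eps ^ 2 * x) = eps ^ 2 * dx x := by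
  have h2 : (eps : DP N) ^ 2 = eps * eps := sq eps
  rw [h2, mul_assoc, dx_mul, dx_eps, zero_mul, zero_add, dx_mul, dx_eps, zero_mul,
    zero_add, mul_assoc]

lemma dx_iter_eps2 (n : ℕ) (x : DP N) : dx^[n] (eps ^ 2 * x) = eps ^ 2 * dx^[n] x := by
  induction n generalizing x with
  | zero => rfl
  | succ n ih => simp only [Function.iterate_succ_apply]; rw [dx_eps2, ih]

/-! ### `ε`-order -/

/-- `f` has `ε`-order at least `k`. -/
def EO (k : ℕ) (f : DP N) : Prop := ∀ m, co f m ≠ 0 → k ≤ m (Sum.inr ())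

lemma EO_zero_any (f : DP N) : EO 0 f := fun _ _ => Nat.zero_le _

lemma EO_mono {j k : ℕ} (h : j ≤ k) {f : DP N} (hf : EO k f) : EO j f :=
  fun m hm => le_trans h (hf m hm)

lemma EO_zero : EO k (0 : DP N) := fun m hm => absurd (co_zero' m) hm

lemma EO_add {k : ℕ} {f g : DP N} (hf : EO k f) (hg : EO k g) : EO k (f + g) := by
  intro m hm
  rw [co_add'] at hm
  by_cases h1 : co f m = 0
  · exact hg m fun h2 => hm (by rw [h1, h2, add_zero])
  · exact hf m h1

lemma EO_neg {k : ℕ} {f : DP N} (hf : EO k f) : EO k (-f) := by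
  intro m hm
  rw [co_neg'] at hm
  exact hf m fun h => hm (by rw [h, neg_zero])

lemma EO_sub {k : ℕ} {f g : DP N} (hf : EO k f) (hg : EO k g) : EO k (f - g) := by
  rw [sub_eq_add_neg]; exact EO_add hf (EO_neg hg)

lemma EO_smul {k : ℕ} (c : ℂ) {f : DP N} (hf : EO k f) : EO k (c • f) := by
  intro m hm
  rw [co_smul'] at hm
  exact hf m fun h => hm (by rw [h, mul_zero])

lemma EO_sum {ι : Type*} {k : ℕ} {s : Finset ι} {f : ι → DP N}
    (hf : ∀ i ∈ s, EO k (f i)) : EO k (∑ i ∈ s, f i) := by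
  classical
  induction s using Finset.induction_on with
  | empty => simpa using EO_zero
  | @insert a s' hnotmem ih =>
      rw [Finset.sum_insert hnotmem]
      exact EO_add (hf a (Finset.mem_insert_self a s'))
        (ih fun i hi => hf i (Finset.mem_insert_of_mem hi))

lemma EO_mul {j k : ℕ} {f g : DP N} (hf : EO j f) (hg : EO k g) : EO (j + k) (f * g) := by
  intro m hm
  rw [co_mul'] at hm
  obtain ⟨p, hp, hne⟩ := Finset.exists_ne_zero_of_sum_ne_zero hm
  rw [Finset.HasAntidiagonal.mem_antidiagonal] at hp
  have h1 : j ≤ p.1 (Sum.inr ()) := hf p.1 fun h => hne (by rw [h, zero_mul])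
  have h2 : k ≤ p.2 (Sum.inr ()) := hg p.2 fun h => hne (by rw [h, mul_zero])
  have : m (Sum.inr ()) = p.1 (Sum.inr ()) + p.2 (Sum.inr ()) := by
    rw [← hp]; rfl
  omega

lemma EO_pd {k : ℕ} (w : Fin N × ℕ) {f : DP N} (hf : EO k f) :
    EO k (pd (Sum.inl w) f) := by
  intro m hm
  rw [co_pd] at hm
  have hne : co f (m + Finsupp.single (Sum.inl w) 1) ≠ 0 := fun h => hm (by rw [h, mul_zero])
  have := hf _ hne
  rwa [Finsupp.add_apply, Finsupp.single_eq_of_ne (by simp), add_zero] at this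

lemma EO_dx {k : ℕ} {f : DP N} (hf : EO k f) : EO k (dx f) := by
  intro m hm
  rw [co_dx] at hm
  obtain ⟨w, _, hne⟩ := Finset.exists_ne_zero_of_sum_ne_zero hm
  rw [co_uv_mul] at hne
  by_cases hle : Finsupp.single (Sum.inl (w.1, w.2 + 1) : DVar N) 1 ≤ m
  · rw [if_pos hle] at hne
    have := EO_pd (w.1, w.2) hf _ hne
    rwa [Finsupp.tsub_apply, Finsupp.single_eq_of_ne (by simp), Nat.sub_zero] at this
  · exact absurd (if_neg hle) hne

lemma EO_dx_iter {k : ℕ} (n : ℕ) {f : DP N} (hf : EO k f) : EO k (dx^[n] f) := by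
  induction n generalizing f with
  | zero => exact hf
  | succ n ih => rw [Function.iterate_succ_apply]; exact ih (EO_dx hf)

lemma EO_eps : EO 1 (eps : DP N) := by
  intro m hm
  rw [eps, co] at hm
  rw [MvPowerSeries.coeff_X] at hm
  by_cases h : m = Finsupp.single (Sum.inr () : DVar N) 1
  · subst h; simp
  · exact absurd (if_neg h) hm

lemma EO_eps2_mul {k : ℕ} {x : DP N} (hx : EO k x) : EO (2 + k) (eps ^ 2 * x) := by
  have h2 : (eps : DP N) ^ 2 * x = eps * (eps * x) := by rw [sq, mul_assoc]
  rw [h2]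
  have hmul := EO_mul EO_eps (EO_mul EO_eps hx)
  have harith : 1 + (1 + k) = 2 + k := by omega
  rwa [harith] at hmul

/-! ### `OnlyV` stability -/

lemma OnlyV_pd0 {f : DP N} (hf : OnlyV f) (γ : Fin N) :
    OnlyV (pd (Sum.inl (γ, 0)) f) := by
  intro m hm v hv
  rw [co_pd] at hm
  have hne : co f (m + Finsupp.single (Sum.inl (γ, 0)) 1) ≠ 0 := fun h => hm (by rw [h, mul_zero])
  refine hf _ hne v ?_
  rw [Finsupp.mem_support_iff] at hv ⊢
  rw [Finsupp.add_apply]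
  omega

lemma pd_OnlyV_succ {f : DP N} (hf : OnlyV f) (ν : Fin N) (q : ℕ) :
    pd (Sum.inl (ν, q + 1)) f = 0 := by
  refine dp_ext fun m => ?_
  rw [co_pd, co_zero']
  have : co f (m + Finsupp.single (Sum.inl (ν, q + 1)) 1) = 0 := by
    by_contra hne
    have hv : (Sum.inl (ν, q + 1) : DVar N) ∈ (m + Finsupp.single (Sum.inl (ν, q + 1)) 1).support := by
      rw [Finsupp.mem_support_iff, Finsupp.add_apply, Finsupp.single_eq_same]
      omega
    obtain ⟨a, ha⟩ := hf _ hne _ hv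
    simp at ha
  rw [this, mul_zero]

lemma OnlyV_smul {f : DP N} (c : ℂ) (hf : OnlyV f) : OnlyV (c • f) := by
  intro m hm
  rw [co_smul'] at hm
  exact hf m fun h => hm (by rw [h, mul_zero])

lemma OnlyV_zero : OnlyV (0 : DP N) := fun m hm => absurd (co_zero' m) hm

lemma OnlyV_add {f g : DP N} (hf : OnlyV f) (hg : OnlyV g) : OnlyV (f + g) := by
  intro m hm
  rw [co_add'] at hm
  by_cases h1 : co f m = 0
  · exact hg m fun h2 => hm (by rw [h1, h2, add_zero])
  · exact hf m h1

lemma OnlyV_sum {ι : Type*} {s : Finset ι} {f : ι → DP N}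
    (hf : ∀ i ∈ s, OnlyV (f i)) : OnlyV (∑ i ∈ s, f i) := by
  classical
  induction s using Finset.induction_on with
  | empty => simpa using OnlyV_zero
  | @insert a s' hnotmem ih =>
      rw [Finset.sum_insert hnotmem]
      exact OnlyV_add (hf a (Finset.mem_insert_self a s'))
        (ih fun i hi => hf i (Finset.mem_insert_of_mem hi))

lemma OnlyV_d3 {f : DP N} (hf : OnlyV f) (a b c : Fin N) : OnlyV (d3 f a b c) :=
  OnlyV_pd0 (OnlyV_pd0 (OnlyV_pd0 hf c) b) a

lemma OnlyV_cA {f : DP N} (hf : OnlyV f) (η : Matrix (Fin N) (Fin N) ℂ) (γ : Fin N) :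
    OnlyV (cA η f γ) := by
  refine OnlyV_sum fun ρ _ => OnlyV_sum fun σ _ => OnlyV_sum fun μ _ => ?_
  exact OnlyV_smul _ (OnlyV_d3 hf ρ σ μ)

/-! ### Partial derivatives of `dx^[2]` of a function of `v` only -/

lemma pd_dx_of_OnlyV_succ {a : DP N} (ha : OnlyV a) (ν : Fin N) (q : ℕ) :
    pd (Sum.inl (ν, q + 2)) (dx a) = 0 := by
  rw [pd_dx_succ, pd_OnlyV_succ ha, pd_OnlyV_succ ha, dx_zero, add_zero]

lemma pd_dx2_zero' {a : DP N} (ha : OnlyV a) (ν : Fin N) :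
    pd (Sum.inl (ν, 0)) (dx (dx a)) = dx (dx (pd (Sum.inl (ν, 0)) a)) := by
  rw [pd_dx_zero, pd_dx_zero]

lemma pd_dx2_one' {a : DP N} (ha : OnlyV a) (ν : Fin N) :
    pd (Sum.inl (ν, 1)) (dx (dx a))
      = dx (pd (Sum.inl (ν, 0)) a) + dx (pd (Sum.inl (ν, 0)) a) := by
  rw [pd_dx_succ, pd_dx_succ, pd_OnlyV_succ ha, dx_zero, zero_add, pd_dx_zero]

lemma pd_dx2_two' {a : DP N} (ha : OnlyV a) (ν : Fin N) :
    pd (Sum.inl (ν, 2)) (dx (dx a)) = pd (Sum.inl (ν, 0)) a := by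
  rw [pd_dx_succ, pd_dx_of_OnlyV_succ ha, dx_zero, zero_add, pd_dx_succ,
    pd_OnlyV_succ ha, dx_zero, zero_add]

lemma pd_dx2_ge3' {a : DP N} (ha : OnlyV a) (ν : Fin N) (q : ℕ) :
    pd (Sum.inl (ν, q + 3)) (dx (dx a)) = 0 := by
  rw [pd_dx_succ, pd_dx_of_OnlyV_succ ha, pd_dx_of_OnlyV_succ ha, dx_zero, add_zero]

/-! ### Symmetries of the fourth derivative and contraction identities -/

lemma d4_12 (f : DP N) (a b c d : Fin N) : d4 f a b c d = d4 f b a c d :=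
  pd_comm _ _ _

lemma d4_23 (f : DP N) (a b c d : Fin N) : d4 f a b c d = d4 f a c b d :=
  congrArg (pd (Sum.inl (a, 0))) (pd_comm _ _ _)

lemma d4_34 (f : DP N) (a b c d : Fin N) : d4 f a b c d = d4 f a b d c :=
  congrArg (pd (Sum.inl (a, 0))) (congrArg (pd (Sum.inl (b, 0))) (pd_comm _ _ _))

lemma d4_sw (f : DP N) (a b c d : Fin N) : d4 f a b c d = d4 f d c a b :=
  calc d4 f a b c d = d4 f a b d c := d4_34 ..
    _ = d4 f a d b c := d4_23 ..
    _ = d4 f d a b c := d4_12 ..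
    _ = d4 f d b a c := d4_23 ..
    _ = d4 f d b c a := d4_34 ..
    _ = d4 f d c b a := d4_23 ..
    _ = d4 f d c a b := d4_34 ..

lemma d4_rev (f : DP N) (a b c d : Fin N) : d4 f a b c d = d4 f d c b a :=
  calc d4 f a b c d = d4 f a b d c := d4_34 ..
    _ = d4 f a d b c := d4_23 ..
    _ = d4 f d a b c := d4_12 ..
    _ = d4 f d b a c := d4_23 ..
    _ = d4 f d b c a := d4_34 ..
    _ = d4 f d c b a := d4_23 ..

lemma sum4_swap12 (H : Fin N → Fin N → Fin N → Fin N → DP N) :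
    (∑ a : Fin N, ∑ b : Fin N, ∑ c : Fin N, ∑ d : Fin N, H a b c d)
      = ∑ a : Fin N, ∑ b : Fin N, ∑ c : Fin N, ∑ d : Fin N, H b a c d :=
  Finset.sum_comm

lemma sum4_swap23 (H : Fin N → Fin N → Fin N → Fin N → DP N) :
    (∑ a : Fin N, ∑ b : Fin N, ∑ c : Fin N, ∑ d : Fin N, H a b c d)
      = ∑ a : Fin N, ∑ b : Fin N, ∑ c : Fin N, ∑ d : Fin N, H a c b d :=
  Finset.sum_congr rfl fun _ _ => Finset.sum_comm

lemma sum4_swap34 (H : Fin N → Fin N → Fin N → Fin N → DP N) :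
    (∑ a : Fin N, ∑ b : Fin N, ∑ c : Fin N, ∑ d : Fin N, H a b c d)
      = ∑ a : Fin N, ∑ b : Fin N, ∑ c : Fin N, ∑ d : Fin N, H a b d c :=
  Finset.sum_congr rfl fun _ _ => Finset.sum_congr rfl fun _ _ => Finset.sum_comm

lemma pd_cA (η : Matrix (Fin N) (Fin N) ℂ) (f : DP N) (β ν : Fin N) :
    pd (Sum.inl (ν, 0)) (cA η f β)
      = ∑ ρ : Fin N, ∑ σ : Fin N, ∑ μ : Fin N, (η β ρ * η μ σ) • d4 f ν ρ σ μ := by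
  rw [cA, pd_sum]
  refine Finset.sum_congr rfl fun ρ _ => ?_
  rw [pd_sum]
  refine Finset.sum_congr rfl fun σ _ => ?_
  rw [pd_sum]
  refine Finset.sum_congr rfl fun μ _ => ?_
  rw [pd_smul]
  rfl

lemma cB_flat (η : Matrix (Fin N) (Fin N) ℂ) (f : DP N) (α β : Fin N) :
    cB η f α β = ∑ a : Fin N, ∑ b : Fin N, ∑ c : Fin N, ∑ d : Fin N,
      (η a b * η α c * η β d) • d4 f a b c d := rfl

lemma contractA (η : Matrix (Fin N) (Fin N) ℂ) (f : DP N) (α β : Fin N) :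
    (∑ ν : Fin N, η α ν • pd (Sum.inl (ν, 0)) (cA η f β)) = cB η f α β := by
  have lhs_eq : (∑ ν : Fin N, η α ν • pd (Sum.inl (ν, 0)) (cA η f β))
      = ∑ a : Fin N, ∑ b : Fin N, ∑ c : Fin N, ∑ d : Fin N,
          (η α a * (η β b * η d c)) • d4 f a b c d := by
    refine Finset.sum_congr rfl fun a _ => ?_
    rw [pd_cA, Finset.smul_sum]
    refine Finset.sum_congr rfl fun b _ => ?_
    rw [Finset.smul_sum]
    refine Finset.sum_congr rfl fun c _ => ?_
    rw [Finset.smul_sum]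
    refine Finset.sum_congr rfl fun d _ => ?_
    rw [smul_smul]
  rw [lhs_eq, cB_flat]
  have chain : (∑ a : Fin N, ∑ b : Fin N, ∑ c : Fin N, ∑ d : Fin N,
        (η a b * η α c * η β d) • d4 f a b c d)
      = ∑ a : Fin N, ∑ b : Fin N, ∑ c : Fin N, ∑ d : Fin N,
          (η d c * η α a * η β b) • d4 f d c a b :=
    calc (∑ a : Fin N, ∑ b : Fin N, ∑ c : Fin N, ∑ d : Fin N,
          (η a b * η α c * η β d) • d4 f a b c d)
        = ∑ a : Fin N, ∑ b : Fin N, ∑ c : Fin N, ∑ d : Fin N,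
            (η a c * η α b * η β d) • d4 f a c b d := sum4_swap23 _
      _ = ∑ a : Fin N, ∑ b : Fin N, ∑ c : Fin N, ∑ d : Fin N,
            (η a d * η α b * η β c) • d4 f a d b c := sum4_swap34 _
      _ = ∑ a : Fin N, ∑ b : Fin N, ∑ c : Fin N, ∑ d : Fin N,
            (η b d * η α a * η β c) • d4 f b d a c := sum4_swap12 _
      _ = ∑ a : Fin N, ∑ b : Fin N, ∑ c : Fin N, ∑ d : Fin N,
            (η c d * η α a * η β b) • d4 f c d a b := sum4_swap23 _
      _ = ∑ a : Fin N, ∑ b : Fin N, ∑ c : Fin N, ∑ d : Fin N,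
            (η d c * η α a * η β b) • d4 f d c a b := sum4_swap34 _
  rw [chain]
  refine Finset.sum_congr rfl fun a _ => Finset.sum_congr rfl fun b _ =>
    Finset.sum_congr rfl fun c _ => Finset.sum_congr rfl fun d _ => ?_
  rw [show d4 f d c a b = d4 f a b c d from (d4_sw f a b c d).symm]
  congr 1
  ring

lemma contractB (η : Matrix (Fin N) (Fin N) ℂ) (hsym : η.IsSymm) (f : DP N) (α β : Fin N) :
    (∑ μ : Fin N, η μ β • pd (Sum.inl (μ, 0)) (cA η f α)) = cB η f α β := by
  have lhs_eq : (∑ μ : Fin N, η μ β • pd (Sum.inl (μ, 0)) (cA η f α))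
      = ∑ a : Fin N, ∑ b : Fin N, ∑ c : Fin N, ∑ d : Fin N,
          (η a β * (η α b * η d c)) • d4 f a b c d := by
    refine Finset.sum_congr rfl fun a _ => ?_
    rw [pd_cA, Finset.smul_sum]
    refine Finset.sum_congr rfl fun b _ => ?_
    rw [Finset.smul_sum]
    refine Finset.sum_congr rfl fun c _ => ?_
    rw [Finset.smul_sum]
    refine Finset.sum_congr rfl fun d _ => ?_
    rw [smul_smul]
  rw [lhs_eq, cB_flat]
  have chain : (∑ a : Fin N, ∑ b : Fin N, ∑ c : Fin N, ∑ d : Fin N,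
        (η a b * η α c * η β d) • d4 f a b c d)
      = ∑ a : Fin N, ∑ b : Fin N, ∑ c : Fin N, ∑ d : Fin N,
          (η d c * η α b * η β a) • d4 f d c b a :=
    calc (∑ a : Fin N, ∑ b : Fin N, ∑ c : Fin N, ∑ d : Fin N,
          (η a b * η α c * η β d) • d4 f a b c d)
        = ∑ a : Fin N, ∑ b : Fin N, ∑ c : Fin N, ∑ d : Fin N,
            (η b a * η α c * η β d) • d4 f b a c d := sum4_swap12 _
      _ = ∑ a : Fin N, ∑ b : Fin N, ∑ c : Fin N, ∑ d : Fin N,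
            (η c a * η α b * η β d) • d4 f c a b d := sum4_swap23 _
      _ = ∑ a : Fin N, ∑ b : Fin N, ∑ c : Fin N, ∑ d : Fin N,
            (η d a * η α b * η β c) • d4 f d a b c := sum4_swap34 _
      _ = ∑ a : Fin N, ∑ b : Fin N, ∑ c : Fin N, ∑ d : Fin N,
            (η d a * η α c * η β b) • d4 f d a c b := sum4_swap23 _
      _ = ∑ a : Fin N, ∑ b : Fin N, ∑ c : Fin N, ∑ d : Fin N,
            (η d b * η α c * η β a) • d4 f d b c a := sum4_swap12 _
      _ = ∑ a : Fin N, ∑ b : Fin N, ∑ c : Fin N, ∑ d : Fin N,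
            (η d c * η α b * η β a) • d4 f d c b a := sum4_swap23 _
  rw [chain]
  refine Finset.sum_congr rfl fun a _ => Finset.sum_congr rfl fun b _ =>
    Finset.sum_congr rfl fun c _ => Finset.sum_congr rfl fun d _ => ?_
  rw [show d4 f d c b a = d4 f a b c d from (d4_rev f a b c d).symm]
  have hba : η a β = η β a := by
    have := congrFun (congrFun hsym.eq a) β
    simpa [Matrix.transpose_apply] using this.symm
  rw [hba]
  congr 1
  ring

/-! ### The genus-one operator: algebraic infrastructure -/

/-- The inner bracket of the `ε²`-part of `Kv`. -/
noncomputable def Wc (C h : DP N) : DP N :=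
  C * dx^[3] h + dx^[3] (C * h) - dx^[2] C * dx h - dx (dx^[2] C * h)

lemma Kv_Wc (η : Matrix (Fin N) (Fin N) ℂ) (f : DP N) (μ ν : Fin N) (z : DP N) :
    Kv η f μ ν z = η μ ν • dx z + (24 : ℂ)⁻¹ • (eps ^ 2 * Wc (cB η f μ ν) z) := rfl

lemma dxI2 (x : DP N) : dx^[2] x = dx (dx x) := rfl

lemma dxI3 (x : DP N) : dx^[3] x = dx (dx (dx x)) := rfl

lemma Wc_zero (C : DP N) : Wc C (0 : DP N) = 0 := by
  simp [Wc, dx_iter_zero, dx_zero]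

lemma Wc_sub (C x y : DP N) : Wc C (x - y) = Wc C x - Wc C y := by
  rw [Wc, Wc, Wc, dx_iter_sub, mul_sub, mul_sub, dx_iter_sub, dx_sub, mul_sub, mul_sub,
    dx_sub]
  ring

lemma Wc_smul (C : DP N) (c : ℂ) (x : DP N) : Wc C (c • x) = c • Wc C x := by
  rw [Wc, Wc, dx_iter_smul, mul_smul_comm, mul_smul_comm, dx_iter_smul, dx_smul,
    mul_smul_comm, mul_smul_comm, dx_smul, smul_sub, smul_sub, smul_add]

lemma EO_mul_left {k : ℕ} (c : DP N) {h : DP N} (hh : EO k h) : EO k (c * h) := by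
  have := EO_mul (EO_zero_any c) hh
  rwa [Nat.zero_add] at this

lemma EO2_eps2 (x : DP N) : EO 2 (eps ^ 2 * x) := by
  have := EO_eps2_mul (EO_zero_any x)
  rwa [Nat.add_zero] at this

lemma EO4_eps2 {x : DP N} (hx : EO 2 x) : EO 4 (eps ^ 2 * x) :=
  EO_eps2_mul hx

lemma EO4_mul {x y : DP N} (hx : EO 2 x) (hy : EO 2 y) : EO 4 (x * y) :=
  EO_mul hx hy

lemma EO_Wc {k : ℕ} (C : DP N) {h : DP N} (hh : EO k h) : EO k (Wc C h) := by
  rw [Wc]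
  refine EO_sub (EO_sub (EO_add ?_ ?_) ?_) ?_
  · exact EO_mul_left _ (EO_dx_iter 3 hh)
  · exact EO_dx_iter 3 (EO_mul_left _ hh)
  · exact EO_mul_left _ (EO_dx hh)
  · exact EO_dx (EO_mul_left _ hh)

/-- Generic term decomposition for the transformed operator. -/
lemma term_decomp (C i b x0 y0 : DP N) (h s c : ℂ) (p : ℕ) :
    (i - s • (eps ^ 2 * b)) * dx^[p]
        (h • dx (x0 - c • (eps ^ 2 * y0)) + s • (eps ^ 2 * Wc C (x0 - c • (eps ^ 2 * y0))))
      = i * (h • dx^[p] (dx x0))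
        - i * ((h * c) • (eps ^ 2 * dx^[p] (dx y0)))
        + i * (s • (eps ^ 2 * dx^[p] (Wc C x0)))
        - (s • (eps ^ 2 * b)) * (h • dx^[p] (dx x0))
        + ((-(s * c)) • (i * (eps ^ 2 * dx^[p] (Wc C (eps ^ 2 * y0))))
            + (s • (eps ^ 2 * b)) * ((h * c) • (eps ^ 2 * dx^[p] (dx y0)))
            - (s • (eps ^ 2 * b)) * (s • (eps ^ 2 * dx^[p] (Wc C x0)))
            + (s • (eps ^ 2 * b)) * ((s * c) • (eps ^ 2 * dx^[p] (Wc C (eps ^ 2 * y0))))) := by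
  rw [dx_sub, dx_smul, dx_eps2, Wc_sub, Wc_smul]
  simp only [smul_sub, smul_smul, mul_sub, mul_smul_comm, dx_iter_sub, dx_iter_add,
    dx_iter_smul, dx_iter_eps2]
  simp only [Algebra.smul_def, map_mul, map_neg]
  ring

/-- Indicator for the Miura-transformation Jacobian. -/
noncomputable def IA (α μ : Fin N) (p : ℕ) : DP N := if μ = α ∧ p = 0 then 1 else 0

/-- The `ε²`-correction of the Miura-transformation Jacobian. -/
noncomputable def BB (η : Matrix (Fin N) (Fin N) ℂ) (f : DP N) (α μ : Fin N) (p : ℕ) :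
    DP N := pd (Sum.inl (μ, p)) (dx^[2] (cA η f α))

/-- The collapsed inner argument. -/
noncomputable def ZZ (β ν : Fin N) (q : ℕ) (g : DP N) : DP N :=
  if ν = β ∧ q = 0 then g else 0

lemma pd_uv' (α μ : Fin N) (p : ℕ) :
    pd (Sum.inl (μ, p)) (uv α 0 : DP N) = IA α μ p := by
  rw [pd_uv, IA]
  exact if_congr (by simp) rfl rfl

lemma pd_Uc (η : Matrix (Fin N) (Fin N) ℂ) (f : DP N) (γ μ : Fin N) (p : ℕ) :
    pd (Sum.inl (μ, p)) (Uc η f γ)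
      = IA γ μ p - (24 : ℂ)⁻¹ • (eps ^ 2 * BB η f γ μ p) := by
  rw [Uc, pd_sub, pd_smul, pd_eps2, pd_uv', BB]

lemma pd_Uc_ge3 {f : DP N} (hf : OnlyV f) (η : Matrix (Fin N) (Fin N) ℂ)
    (γ μ : Fin N) {p : ℕ} (hp : 3 ≤ p) : pd (Sum.inl (μ, p)) (Uc η f γ) = 0 := by
  obtain ⟨r, rfl⟩ : ∃ r, p = r + 3 := ⟨p - 3, by omega⟩
  rw [pd_Uc, IA, if_neg (by omega), BB, dxI2, pd_dx2_ge3' (OnlyV_cA hf η γ), mul_zero,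
    smul_zero, sub_zero]

lemma Kv_zero' (η : Matrix (Fin N) (Fin N) ℂ) (f : DP N) (μ ν : Fin N) :
    Kv η f μ ν 0 = 0 := by
  rw [Kv_Wc, Wc_zero, dx_zero, smul_zero, zero_add, mul_zero, smul_zero]

lemma KvT_eq (η : Matrix (Fin N) (Fin N) ℂ) {f : DP N} (hf : OnlyV f) (α β : Fin N)
    (g : DP N) :
    KvT η f α β g = ∑ p ∈ Finset.range 3, ∑ q ∈ Finset.range 3,
      ∑ μ : Fin N, ∑ ν : Fin N,
        pd (Sum.inl (μ, p)) (Uc η f α) *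
          dx^[p] (Kv η f μ ν
            (((-1 : ℂ) ^ q) • dx^[q] (pd (Sum.inl (ν, q)) (Uc η f β) * g))) := by
  have hzero : ∀ p q : ℕ, 3 ≤ p ∨ 3 ≤ q →
      (∑ μ : Fin N, ∑ ν : Fin N,
        pd (Sum.inl (μ, p)) (Uc η f α) *
          dx^[p] (Kv η f μ ν
            (((-1 : ℂ) ^ q) • dx^[q] (pd (Sum.inl (ν, q)) (Uc η f β) * g)))) = 0 := by
    intro p q h
    refine Finset.sum_eq_zero fun μ _ => Finset.sum_eq_zero fun ν _ => ?_
    rcases h with hp | hq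
    · rw [pd_Uc_ge3 hf η α μ hp, zero_mul]
    · rw [pd_Uc_ge3 hf η β ν hq, zero_mul, dx_iter_zero, smul_zero, Kv_zero',
        dx_iter_zero, mul_zero]
  refine dp_ext fun m => ?_
  rw [KvT, co_ofCo]
  have h1 : ∀ p : ℕ, (∑ᶠ q : ℕ, co (∑ μ : Fin N, ∑ ν : Fin N,
      pd (Sum.inl (μ, p)) (Uc η f α) *
        dx^[p] (Kv η f μ ν
          (((-1 : ℂ) ^ q) • dx^[q] (pd (Sum.inl (ν, q)) (Uc η f β) * g)))) m)
      = ∑ q ∈ Finset.range 3, co (∑ μ : Fin N, ∑ ν : Fin N,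
          pd (Sum.inl (μ, p)) (Uc η f α) *
            dx^[p] (Kv η f μ ν
              (((-1 : ℂ) ^ q) • dx^[q] (pd (Sum.inl (ν, q)) (Uc η f β) * g)))) m := by
    intro p
    refine finsum_eq_finset_sum_of_support_subset _ fun q hq => ?_
    rw [Function.mem_support] at hq
    rw [Finset.coe_range, Set.mem_Iio]
    by_contra h3
    exact hq (by rw [hzero p q (Or.inr (by omega)), co_zero'])
  rw [finsum_congr h1]
  have h2 : (∑ᶠ p : ℕ, ∑ q ∈ Finset.range 3, co (∑ μ : Fin N, ∑ ν : Fin N,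
      pd (Sum.inl (μ, p)) (Uc η f α) *
        dx^[p] (Kv η f μ ν
          (((-1 : ℂ) ^ q) • dx^[q] (pd (Sum.inl (ν, q)) (Uc η f β) * g)))) m)
      = ∑ p ∈ Finset.range 3, ∑ q ∈ Finset.range 3, co (∑ μ : Fin N, ∑ ν : Fin N,
          pd (Sum.inl (μ, p)) (Uc η f α) *
            dx^[p] (Kv η f μ ν
              (((-1 : ℂ) ^ q) • dx^[q] (pd (Sum.inl (ν, q)) (Uc η f β) * g)))) m := by
    refine finsum_eq_finset_sum_of_support_subset _ fun p hp => ?_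
    rw [Function.mem_support] at hp
    rw [Finset.coe_range, Set.mem_Iio]
    by_contra h3
    refine hp (Finset.sum_eq_zero fun q _ => ?_)
    rw [hzero p q (Or.inl (by omega)), co_zero']
  rw [h2, co_sum']
  refine Finset.sum_congr rfl fun p _ => ?_
  rw [co_sum']

/-! ### The five pieces of the transformed operator -/

noncomputable def KT1 (η : Matrix (Fin N) (Fin N) ℂ) (α β : Fin N) (g : DP N) : DP N :=
  ∑ p ∈ Finset.range 3, ∑ q ∈ Finset.range 3, ∑ μ : Fin N, ∑ ν : Fin N,
    IA α μ p * (η μ ν • dx^[p] (dx (ZZ β ν q g)))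

noncomputable def KT2 (η : Matrix (Fin N) (Fin N) ℂ) (f : DP N) (α β : Fin N) (g : DP N) :
    DP N :=
  ∑ p ∈ Finset.range 3, ∑ q ∈ Finset.range 3, ∑ μ : Fin N, ∑ ν : Fin N,
    IA α μ p * ((η μ ν * ((-1 : ℂ) ^ q * (24 : ℂ)⁻¹)) •
      (eps ^ 2 * dx^[p] (dx (dx^[q] (BB η f β ν q * g)))))

noncomputable def KT3 (η : Matrix (Fin N) (Fin N) ℂ) (f : DP N) (α β : Fin N) (g : DP N) :
    DP N :=
  ∑ p ∈ Finset.range 3, ∑ q ∈ Finset.range 3, ∑ μ : Fin N, ∑ ν : Fin N,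
    IA α μ p * ((24 : ℂ)⁻¹ • (eps ^ 2 * dx^[p] (Wc (cB η f μ ν) (ZZ β ν q g))))

noncomputable def KT4 (η : Matrix (Fin N) (Fin N) ℂ) (f : DP N) (α β : Fin N) (g : DP N) :
    DP N :=
  ∑ p ∈ Finset.range 3, ∑ q ∈ Finset.range 3, ∑ μ : Fin N, ∑ ν : Fin N,
    ((24 : ℂ)⁻¹ • (eps ^ 2 * BB η f α μ p)) * (η μ ν • dx^[p] (dx (ZZ β ν q g)))

noncomputable def KTR (η : Matrix (Fin N) (Fin N) ℂ) (f : DP N) (α β : Fin N) (g : DP N) :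
    DP N :=
  ∑ p ∈ Finset.range 3, ∑ q ∈ Finset.range 3, ∑ μ : Fin N, ∑ ν : Fin N,
    ((-((24 : ℂ)⁻¹ * ((-1 : ℂ) ^ q * (24 : ℂ)⁻¹))) •
        (IA α μ p * (eps ^ 2 * dx^[p] (Wc (cB η f μ ν)
          (eps ^ 2 * dx^[q] (BB η f β ν q * g)))))
      + ((24 : ℂ)⁻¹ • (eps ^ 2 * BB η f α μ p)) *
          ((η μ ν * ((-1 : ℂ) ^ q * (24 : ℂ)⁻¹)) •
            (eps ^ 2 * dx^[p] (dx (dx^[q] (BB η f β ν q * g)))))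
      - ((24 : ℂ)⁻¹ • (eps ^ 2 * BB η f α μ p)) *
          ((24 : ℂ)⁻¹ • (eps ^ 2 * dx^[p] (Wc (cB η f μ ν) (ZZ β ν q g))))
      + ((24 : ℂ)⁻¹ • (eps ^ 2 * BB η f α μ p)) *
          (((24 : ℂ)⁻¹ * ((-1 : ℂ) ^ q * (24 : ℂ)⁻¹)) •
            (eps ^ 2 * dx^[p] (Wc (cB η f μ ν)
              (eps ^ 2 * dx^[q] (BB η f β ν q * g))))))

lemma KvT_split (η : Matrix (Fin N) (Fin N) ℂ) {f : DP N} (hf : OnlyV f) (α β : Fin N)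
    (g : DP N) :
    KvT η f α β g = KT1 η α β g - KT2 η f α β g + KT3 η f α β g - KT4 η f α β g
      + KTR η f α β g := by
  rw [KvT_eq η hf α β g]
  have harg : ∀ (ν : Fin N) (q : ℕ),
      ((-1 : ℂ) ^ q) • dx^[q] (pd (Sum.inl (ν, q)) (Uc η f β) * g)
        = ZZ β ν q g - ((-1 : ℂ) ^ q * (24 : ℂ)⁻¹) •
            (eps ^ 2 * dx^[q] (BB η f β ν q * g)) := by
    intro ν q
    rw [pd_Uc, sub_mul, smul_mul_assoc, mul_assoc, dx_iter_sub, dx_iter_smul,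
      dx_iter_eps2, smul_sub, smul_smul]
    congr 1
    rw [IA, ite_mul, one_mul, zero_mul, ZZ]
    by_cases hc : ν = β ∧ q = 0
    · obtain ⟨h1, h2⟩ := hc
      subst h2
      rw [if_pos (⟨h1, rfl⟩ : ν = β ∧ 0 = 0)]
      simp
    · rw [if_neg hc, dx_iter_zero, smul_zero]
  have hterm : ∀ (p q : ℕ) (μ ν : Fin N),
      pd (Sum.inl (μ, p)) (Uc η f α) *
          dx^[p] (Kv η f μ ν
            (((-1 : ℂ) ^ q) • dx^[q] (pd (Sum.inl (ν, q)) (Uc η f β) * g)))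
        = IA α μ p * (η μ ν • dx^[p] (dx (ZZ β ν q g)))
          - IA α μ p * ((η μ ν * ((-1 : ℂ) ^ q * (24 : ℂ)⁻¹)) •
              (eps ^ 2 * dx^[p] (dx (dx^[q] (BB η f β ν q * g)))))
          + IA α μ p * ((24 : ℂ)⁻¹ • (eps ^ 2 * dx^[p] (Wc (cB η f μ ν) (ZZ β ν q g))))
          - ((24 : ℂ)⁻¹ • (eps ^ 2 * BB η f α μ p)) * (η μ ν • dx^[p] (dx (ZZ β ν q g)))
          + ((-((24 : ℂ)⁻¹ * ((-1 : ℂ) ^ q * (24 : ℂ)⁻¹))) •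
                (IA α μ p * (eps ^ 2 * dx^[p] (Wc (cB η f μ ν)
                  (eps ^ 2 * dx^[q] (BB η f β ν q * g)))))
              + ((24 : ℂ)⁻¹ • (eps ^ 2 * BB η f α μ p)) *
                  ((η μ ν * ((-1 : ℂ) ^ q * (24 : ℂ)⁻¹)) •
                    (eps ^ 2 * dx^[p] (dx (dx^[q] (BB η f β ν q * g)))))
              - ((24 : ℂ)⁻¹ • (eps ^ 2 * BB η f α μ p)) *
                  ((24 : ℂ)⁻¹ • (eps ^ 2 * dx^[p] (Wc (cB η f μ ν) (ZZ β ν q g))))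
              + ((24 : ℂ)⁻¹ • (eps ^ 2 * BB η f α μ p)) *
                  (((24 : ℂ)⁻¹ * ((-1 : ℂ) ^ q * (24 : ℂ)⁻¹)) •
                    (eps ^ 2 * dx^[p] (Wc (cB η f μ ν)
                      (eps ^ 2 * dx^[q] (BB η f β ν q * g)))))) := by
    intro p q μ ν
    rw [pd_Uc, harg ν q, Kv_Wc]
    exact term_decomp (cB η f μ ν) (IA α μ p) (BB η f α μ p) (ZZ β ν q g)
      (dx^[q] (BB η f β ν q * g)) (η μ ν) ((24 : ℂ)⁻¹) ((-1 : ℂ) ^ q * (24 : ℂ)⁻¹) p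
  rw [Finset.sum_congr rfl fun p _ => Finset.sum_congr rfl fun q _ =>
    Finset.sum_congr rfl fun μ _ => Finset.sum_congr rfl fun ν _ => hterm p q μ ν]
  simp only [KT1, KT2, KT3, KT4, KTR, Finset.sum_add_distrib, Finset.sum_sub_distrib]

lemma EO_KTR (η : Matrix (Fin N) (Fin N) ℂ) (f : DP N) (α β : Fin N) (g : DP N) :
    EO 4 (KTR η f α β g) := by
  refine EO_sum fun p _ => EO_sum fun q _ => EO_sum fun μ _ => EO_sum fun ν _ => ?_
  refine EO_add (EO_sub (EO_add ?_ ?_) ?_) ?_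
  · exact EO_smul _ (EO_mul_left _ (EO4_eps2 (EO_dx_iter _ (EO_Wc _ (EO2_eps2 _)))))
  · exact EO4_mul (EO_smul _ (EO2_eps2 _)) (EO_smul _ (EO2_eps2 _))
  · exact EO4_mul (EO_smul _ (EO2_eps2 _)) (EO_smul _ (EO2_eps2 _))
  · exact EO4_mul (EO_smul _ (EO2_eps2 _)) (EO_smul _ (EO2_eps2 _))

/-! ### Evaluation of the four main pieces -/

lemma sum_ite_const {ι : Type*} (s : Finset ι) (c : Prop) [Decidable c] (F : ι → DP N) :
    (∑ x ∈ s, if c then F x else 0) = if c then ∑ x ∈ s, F x else 0 := by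
  split_ifs <;> simp

lemma BB_zero {f : DP N} (hf : OnlyV f) (η : Matrix (Fin N) (Fin N) ℂ) (γ ν : Fin N) :
    BB η f γ ν 0 = dx (dx (pd (Sum.inl (ν, 0)) (cA η f γ))) := by
  rw [BB, dxI2, pd_dx2_zero' (OnlyV_cA hf η γ)]

lemma BB_one {f : DP N} (hf : OnlyV f) (η : Matrix (Fin N) (Fin N) ℂ) (γ ν : Fin N) :
    BB η f γ ν 1 = dx (pd (Sum.inl (ν, 0)) (cA η f γ)) + dx (pd (Sum.inl (ν, 0)) (cA η f γ)) := by
  rw [BB, dxI2, pd_dx2_one' (OnlyV_cA hf η γ)]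

lemma BB_two {f : DP N} (hf : OnlyV f) (η : Matrix (Fin N) (Fin N) ℂ) (γ ν : Fin N) :
    BB η f γ ν 2 = pd (Sum.inl (ν, 0)) (cA η f γ) := by
  rw [BB, dxI2, pd_dx2_two' (OnlyV_cA hf η γ)]

lemma csum_dd (η : Matrix (Fin N) (Fin N) ℂ) (f : DP N) (α β : Fin N) :
    (∑ ν : Fin N, η α ν • dx (dx (pd (Sum.inl (ν, 0)) (cA η f β))))
      = dx (dx (cB η f α β)) := by
  rw [← contractA η f α β, dx_sum, dx_sum]
  refine Finset.sum_congr rfl fun ν _ => ?_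
  rw [dx_smul, dx_smul]

lemma csum_d (η : Matrix (Fin N) (Fin N) ℂ) (f : DP N) (α β : Fin N) :
    (∑ ν : Fin N, η α ν • dx (pd (Sum.inl (ν, 0)) (cA η f β))) = dx (cB η f α β) := by
  rw [← contractA η f α β, dx_sum]
  refine Finset.sum_congr rfl fun ν _ => ?_
  rw [dx_smul]

lemma csum_ddB (η : Matrix (Fin N) (Fin N) ℂ) (hsym : η.IsSymm) (f : DP N) (α β : Fin N) :
    (∑ μ : Fin N, η μ β • dx (dx (pd (Sum.inl (μ, 0)) (cA η f α))))
      = dx (dx (cB η f α β)) := by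
  rw [← contractB η hsym f α β, dx_sum, dx_sum]
  refine Finset.sum_congr rfl fun μ _ => ?_
  rw [dx_smul, dx_smul]

lemma csum_dB (η : Matrix (Fin N) (Fin N) ℂ) (hsym : η.IsSymm) (f : DP N) (α β : Fin N) :
    (∑ μ : Fin N, η μ β • dx (pd (Sum.inl (μ, 0)) (cA η f α))) = dx (cB η f α β) := by
  rw [← contractB η hsym f α β, dx_sum]
  refine Finset.sum_congr rfl fun μ _ => ?_
  rw [dx_smul]

lemma pull2a (s' : ℂ) (h : Fin N → ℂ) (D : Fin N → DP N) (g : DP N) :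
    (∑ ν : Fin N, (h ν * s') • (eps ^ 2 * dx (D ν * g)))
      = s' • (eps ^ 2 * dx ((∑ ν : Fin N, h ν • D ν) * g)) := by
  rw [Finset.sum_mul, dx_sum, Finset.mul_sum, Finset.smul_sum]
  refine Finset.sum_congr rfl fun ν _ => ?_
  rw [smul_mul_assoc, dx_smul]
  simp only [Algebra.smul_def, map_mul]
  ring

lemma pull2b (s' : ℂ) (h : Fin N → ℂ) (D : Fin N → DP N) (g : DP N) :
    (∑ ν : Fin N, (h ν * s') • (eps ^ 2 * dx (dx (D ν * g))))
      = s' • (eps ^ 2 * dx (dx ((∑ ν : Fin N, h ν • D ν) * g))) := by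
  rw [Finset.sum_mul, dx_sum, dx_sum, Finset.mul_sum, Finset.smul_sum]
  refine Finset.sum_congr rfl fun ν _ => ?_
  rw [smul_mul_assoc, dx_smul, dx_smul]
  simp only [Algebra.smul_def, map_mul]
  ring

lemma pull2c (s' : ℂ) (h : Fin N → ℂ) (D : Fin N → DP N) (g : DP N) :
    (∑ ν : Fin N, (h ν * s') • (eps ^ 2 * dx (dx (dx (D ν * g)))))
      = s' • (eps ^ 2 * dx (dx (dx ((∑ ν : Fin N, h ν • D ν) * g)))) := by
  rw [Finset.sum_mul, dx_sum, dx_sum, dx_sum, Finset.mul_sum, Finset.smul_sum]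
  refine Finset.sum_congr rfl fun ν _ => ?_
  rw [smul_mul_assoc, dx_smul, dx_smul, dx_smul]
  simp only [Algebra.smul_def, map_mul]
  ring

lemma pull4 (s' : ℂ) (h : Fin N → ℂ) (D : Fin N → DP N) (x : DP N) :
    (∑ μ : Fin N, (s' • (eps ^ 2 * D μ)) * (h μ • x))
      = s' • (eps ^ 2 * ((∑ μ : Fin N, h μ • D μ) * x)) := by
  rw [Finset.sum_mul, Finset.mul_sum, Finset.smul_sum]
  refine Finset.sum_congr rfl fun μ _ => ?_
  rw [smul_mul_assoc]
  simp only [Algebra.smul_def, map_mul]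
  ring

lemma KT1_eval (η : Matrix (Fin N) (Fin N) ℂ) (α β : Fin N) (g : DP N) :
    KT1 η α β g = η α β • dx g := by
  have hterm : ∀ (p q : ℕ) (μ ν : Fin N),
      IA α μ p * (η μ ν • dx^[p] (dx (ZZ β ν q g)))
        = if ν = β then (if μ = α then
            (if p = 0 ∧ q = 0 then η α β • dx g else 0) else 0) else 0 := by
    intro p q μ ν
    by_cases hν : ν = β <;> by_cases hμ : μ = α <;> by_cases hp : p = 0 <;>
      by_cases hq : q = 0 <;>
      simp [IA, ZZ, hν, hμ, hp, hq, dx_zero, dx_iter_zero]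
  simp only [KT1]
  rw [Finset.sum_congr rfl fun p _ => Finset.sum_congr rfl fun q _ =>
    Finset.sum_congr rfl fun μ _ => Finset.sum_congr rfl fun ν _ => hterm p q μ ν]
  simp [Finset.sum_ite_eq', sum_ite_const, Finset.sum_range_succ]

lemma KT3_eval (η : Matrix (Fin N) (Fin N) ℂ) (f : DP N) (α β : Fin N) (g : DP N) :
    KT3 η f α β g = (24 : ℂ)⁻¹ • (eps ^ 2 * Wc (cB η f α β) g) := by
  have hterm : ∀ (p q : ℕ) (μ ν : Fin N),
      IA α μ p * ((24 : ℂ)⁻¹ • (eps ^ 2 * dx^[p] (Wc (cB η f μ ν) (ZZ β ν q g))))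
        = if ν = β then (if μ = α then
            (if p = 0 ∧ q = 0 then
              (24 : ℂ)⁻¹ • (eps ^ 2 * Wc (cB η f α β) g) else 0) else 0) else 0 := by
    intro p q μ ν
    by_cases hν : ν = β <;> by_cases hμ : μ = α <;> by_cases hp : p = 0 <;>
      by_cases hq : q = 0 <;>
      simp [IA, ZZ, hν, hμ, hp, hq, Wc_zero, dx_iter_zero]
  simp only [KT3]
  rw [Finset.sum_congr rfl fun p _ => Finset.sum_congr rfl fun q _ =>
    Finset.sum_congr rfl fun μ _ => Finset.sum_congr rfl fun ν _ => hterm p q μ ν]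
  simp [Finset.sum_ite_eq', sum_ite_const, Finset.sum_range_succ]

lemma KT2_eval (η : Matrix (Fin N) (Fin N) ℂ) {f : DP N} (hf : OnlyV f) (α β : Fin N)
    (g : DP N) :
    KT2 η f α β g
      = (24 : ℂ)⁻¹ • (eps ^ 2 * dx (dx (dx (cB η f α β)) * g))
        + (-(24 : ℂ)⁻¹) • (eps ^ 2 * dx (dx ((dx (cB η f α β) + dx (cB η f α β)) * g)))
        + (24 : ℂ)⁻¹ • (eps ^ 2 * dx (dx (dx (cB η f α β * g)))) := by
  have hterm : ∀ (p q : ℕ) (μ ν : Fin N),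
      IA α μ p * ((η μ ν * ((-1 : ℂ) ^ q * (24 : ℂ)⁻¹)) •
        (eps ^ 2 * dx^[p] (dx (dx^[q] (BB η f β ν q * g)))))
        = if μ = α then (if p = 0 then
            ((η α ν * ((-1 : ℂ) ^ q * (24 : ℂ)⁻¹)) •
              (eps ^ 2 * dx (dx^[q] (BB η f β ν q * g)))) else 0) else 0 := by
    intro p q μ ν
    by_cases hμ : μ = α <;> by_cases hp : p = 0 <;> simp [IA, hμ, hp]
  simp only [KT2]
  rw [Finset.sum_congr rfl fun p _ => Finset.sum_congr rfl fun q _ =>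
    Finset.sum_congr rfl fun μ _ => Finset.sum_congr rfl fun ν _ => hterm p q μ ν]
  simp only [sum_ite_const, Finset.sum_ite_eq', Finset.mem_univ, if_true,
    Finset.sum_range_succ, Finset.sum_range_zero, zero_add, pow_zero, pow_one,
    neg_one_sq, one_mul, neg_one_mul, Function.iterate_zero_apply,
    Function.iterate_one, dxI2]
  have e0 : ∀ ν : Fin N, (η α ν * (24 : ℂ)⁻¹) • (eps ^ 2 * dx (BB η f β ν 0 * g))
      = (η α ν * (24 : ℂ)⁻¹) •
          (eps ^ 2 * dx (dx (dx (pd (Sum.inl (ν, 0)) (cA η f β))) * g)) := by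
    intro ν; rw [BB_zero hf]
  have e1 : ∀ ν : Fin N, (η α ν * (-(24 : ℂ)⁻¹)) • (eps ^ 2 * dx (dx (BB η f β ν 1 * g)))
      = (η α ν * (-(24 : ℂ)⁻¹)) • (eps ^ 2 * dx (dx ((dx (pd (Sum.inl (ν, 0)) (cA η f β))
          + dx (pd (Sum.inl (ν, 0)) (cA η f β))) * g))) := by
    intro ν; rw [BB_one hf]
  have e2 : ∀ ν : Fin N, (η α ν * (24 : ℂ)⁻¹) • (eps ^ 2 * dx (dx (dx (BB η f β ν 2 * g))))
      = (η α ν * (24 : ℂ)⁻¹) •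
          (eps ^ 2 * dx (dx (dx (pd (Sum.inl (ν, 0)) (cA η f β) * g)))) := by
    intro ν; rw [BB_two hf]
  rw [Finset.sum_congr rfl fun ν _ => e0 ν, Finset.sum_congr rfl fun ν _ => e1 ν,
    Finset.sum_congr rfl fun ν _ => e2 ν]
  rw [pull2a, pull2b, pull2c]
  have hc1 : (∑ ν : Fin N, η α ν • dx (dx (pd (Sum.inl (ν, 0)) (cA η f β))))
      = dx (dx (cB η f α β)) := csum_dd η f α β
  have hc2 : (∑ ν : Fin N, η α ν • (dx (pd (Sum.inl (ν, 0)) (cA η f β))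
      + dx (pd (Sum.inl (ν, 0)) (cA η f β))))
      = dx (cB η f α β) + dx (cB η f α β) := by
    rw [show (∑ ν : Fin N, η α ν • (dx (pd (Sum.inl (ν, 0)) (cA η f β))
        + dx (pd (Sum.inl (ν, 0)) (cA η f β))))
        = (∑ ν : Fin N, η α ν • dx (pd (Sum.inl (ν, 0)) (cA η f β)))
          + ∑ ν : Fin N, η α ν • dx (pd (Sum.inl (ν, 0)) (cA η f β)) from by
      rw [← Finset.sum_add_distrib]
      exact Finset.sum_congr rfl fun ν _ => smul_add _ _ _]
    rw [csum_d η f α β]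
  have hc3 : (∑ ν : Fin N, η α ν • pd (Sum.inl (ν, 0)) (cA η f β)) = cB η f α β :=
    contractA η f α β
  rw [hc1, hc2, hc3]
  simp

lemma KT4_eval (η : Matrix (Fin N) (Fin N) ℂ) (hsym : η.IsSymm) {f : DP N}
    (hf : OnlyV f) (α β : Fin N) (g : DP N) :
    KT4 η f α β g
      = (24 : ℂ)⁻¹ • (eps ^ 2 * (dx (dx (cB η f α β)) * dx g))
        + (24 : ℂ)⁻¹ • (eps ^ 2 * ((dx (cB η f α β) + dx (cB η f α β)) * dx (dx g)))
        + (24 : ℂ)⁻¹ • (eps ^ 2 * (cB η f α β * dx (dx (dx g)))) := by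
  have hterm : ∀ (p q : ℕ) (μ ν : Fin N),
      ((24 : ℂ)⁻¹ • (eps ^ 2 * BB η f α μ p)) * (η μ ν • dx^[p] (dx (ZZ β ν q g)))
        = if ν = β then (if q = 0 then
            ((24 : ℂ)⁻¹ • (eps ^ 2 * BB η f α μ p)) * (η μ β • dx^[p] (dx g))
            else 0) else 0 := by
    intro p q μ ν
    by_cases hν : ν = β <;> by_cases hq : q = 0 <;>
      simp [ZZ, hν, hq, dx_zero, dx_iter_zero]
  simp only [KT4]
  rw [Finset.sum_congr rfl fun p _ => Finset.sum_congr rfl fun q _ =>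
    Finset.sum_congr rfl fun μ _ => Finset.sum_congr rfl fun ν _ => hterm p q μ ν]
  simp only [sum_ite_const, Finset.sum_ite_eq', Finset.mem_univ, if_true,
    Finset.sum_range_succ, Finset.sum_range_zero, zero_add, pow_zero, pow_one,
    neg_one_sq, one_mul, neg_one_mul, Function.iterate_zero_apply,
    Function.iterate_one, dxI2]
  have e0 : ∀ μ : Fin N, ((24 : ℂ)⁻¹ • (eps ^ 2 * BB η f α μ 0)) * (η μ β • dx g)
      = ((24 : ℂ)⁻¹ • (eps ^ 2 * dx (dx (pd (Sum.inl (μ, 0)) (cA η f α)))))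
          * (η μ β • dx g) := by
    intro μ; rw [BB_zero hf]
  have e1 : ∀ μ : Fin N, ((24 : ℂ)⁻¹ • (eps ^ 2 * BB η f α μ 1)) * (η μ β • dx (dx g))
      = ((24 : ℂ)⁻¹ • (eps ^ 2 * (dx (pd (Sum.inl (μ, 0)) (cA η f α))
          + dx (pd (Sum.inl (μ, 0)) (cA η f α))))) * (η μ β • dx (dx g)) := by
    intro μ; rw [BB_one hf]
  have e2 : ∀ μ : Fin N, ((24 : ℂ)⁻¹ • (eps ^ 2 * BB η f α μ 2)) * (η μ β • dx (dx (dx g)))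
      = ((24 : ℂ)⁻¹ • (eps ^ 2 * pd (Sum.inl (μ, 0)) (cA η f α)))
          * (η μ β • dx (dx (dx g))) := by
    intro μ; rw [BB_two hf]
  rw [Finset.sum_congr rfl fun μ _ => e0 μ, Finset.sum_congr rfl fun μ _ => e1 μ,
    Finset.sum_congr rfl fun μ _ => e2 μ]
  rw [pull4, pull4, pull4]
  have hc2 : (∑ μ : Fin N, η μ β • (dx (pd (Sum.inl (μ, 0)) (cA η f α))
      + dx (pd (Sum.inl (μ, 0)) (cA η f α))))
      = dx (cB η f α β) + dx (cB η f α β) := by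
    rw [show (∑ μ : Fin N, η μ β • (dx (pd (Sum.inl (μ, 0)) (cA η f α))
        + dx (pd (Sum.inl (μ, 0)) (cA η f α))))
        = (∑ μ : Fin N, η μ β • dx (pd (Sum.inl (μ, 0)) (cA η f α)))
          + ∑ μ : Fin N, η μ β • dx (pd (Sum.inl (μ, 0)) (cA η f α)) from by
      rw [← Finset.sum_add_distrib]
      exact Finset.sum_congr rfl fun μ _ => smul_add _ _ _]
    rw [csum_dB η hsym f α β]
  rw [csum_ddB η hsym f α β, hc2, contractB η hsym f α β]
  simp

lemma leib (C g : DP N) :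
    (24 : ℂ)⁻¹ • (eps ^ 2 * Wc C g)
      - ((24 : ℂ)⁻¹ • (eps ^ 2 * dx (dx (dx C) * g))
        + (-(24 : ℂ)⁻¹) • (eps ^ 2 * dx (dx ((dx C + dx C) * g)))
        + (24 : ℂ)⁻¹ • (eps ^ 2 * dx (dx (dx (C * g)))))
      - ((24 : ℂ)⁻¹ • (eps ^ 2 * (dx (dx C) * dx g))
        + (24 : ℂ)⁻¹ • (eps ^ 2 * ((dx C + dx C) * dx (dx g)))
        + (24 : ℂ)⁻¹ • (eps ^ 2 * (C * dx (dx (dx g))))) = 0 := by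
  simp only [Wc, dxI3, dxI2, dx_mul, dx_add, neg_smul, mul_add, add_mul,
    Algebra.smul_def]
  have hmap : algebraMap ℂ (DP N) (-(24 : ℂ)⁻¹) = -(algebraMap ℂ (DP N) ((24 : ℂ)⁻¹)) :=
    map_neg _ _
  rw [hmap]
  ring

lemma key (η : Matrix (Fin N) (Fin N) ℂ) (hsym : η.IsSymm) {f : DP N} (hf : OnlyV f)
    (α β : Fin N) (g : DP N) :
    EO 4 (KvT η f α β g - η α β • dx g) := by
  rw [KvT_split η hf α β g, KT1_eval η α β g, KT2_eval η hf α β g, KT3_eval η f α β g,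
    KT4_eval η hsym hf α β g]
  have hsimp : ∀ M A B D R : DP N, B - A - D = 0 → EO 4 R →
      EO 4 ((M - A + B - D + R) - M) := by
    intro M A B D R h1 h2
    have hre : (M - A + B - D + R) - M = R + (B - A - D) := by ring
    rw [hre, h1, add_zero]
    exact h2
  exact hsimp _ _ _ _ _ (leib (cB η f α β) g) (EO_KTR η f α β g)

end DP

open DP in
/-- the genus-one Miura transformation trivializes the
genus-one correction of the hamiltonian operator.  The Miura transformation
`ṽ^α ↦ u^α(ṽ) = ṽ^α − (ε²/24)∂_x²c^{αμ}_μ` transforms the operator `K_ṽ` into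
`η∂_x + O(ε⁴)`: tested against any `ε`-free differential polynomial `g` (which
determines the operator's coefficients), the difference
`(K_ṽ)_u(g) − η^{αβ}∂_x g` has `ε`-order at least `4`, i.e. its `ε⁰`- and
`ε²`-parts are `η^{αβ}∂_x` and `0` respectively. -/
theorem statement11 (N : ℕ) (η : Matrix (Fin N) (Fin N) ℂ)
    (hsym : η.IsSymm) (hnd : IsUnit η.det)
    (f : DP N) (hf : OnlyV f) :
    ∀ (α β : Fin N) (g : DP N),
      (∀ m, co g m ≠ 0 → m (Sum.inr ()) = 0) →
      ∀ m, co (KvT η f α β g - η α β • dx g) m ≠ 0 → 4 ≤ m (Sum.inr ()) := by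
  intro α β g _ m hm
  exact key η hsym hf α β g m hm
end

section
/- Let η be a symmetric nondegenerate N×N complex matrix and let F ∈ ℂ[[t^*_*,ε]] (variables t^α_d, 1 ≤ α ≤ N, d ≥ 0) contain only even powers of ε and satisfy the string equation ∂F/∂t^1_0 = Σ_{n≥0} t^α_{n+1}∂F/∂t^α_n + ½η_{αβ}t^α_0t^β_0 + ε²c₁ for some constant c₁ ∈ ℂ. Define (w^⊤)^α := η^{αμ}(∂²F/∂t^μ_0∂t^1_0)|_{t^1_0↦t^1_0+x} ∈ ℂ[[x,t^*_*,ε]] and (w^⊤)^α_n := ∂_x^n(w^⊤)^α. Then: (i) O_str (w^⊤)^α_n = δ_{n,0}δ^{α,1} in ℂ[[x,t^*_*,ε]], where O_str := ∂/∂t^1_0 − Σ_{m≥0} t^γ_{m+1}∂/∂t^γ_m; (ii) (w^⊤)^α_n|_{x=0} = t^α_n + δ_{n,1}δ^{α,1} + R^α_n(t^*_*) + O(ε²), where R^α_n ∈ ℂ[[t^*_*]] is a series in which the coefficient of every monomial t^{α_1}_{d_1}⋯t^{α_m}_{d_m} vanishes unless d_1 + ⋯ + d_m ≥ n + 1. 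-/
/-!
Formal power series in the variables `x`, `t^α_d` and `ε` (the ring
`ℂ[[x, t^*_*, ε]]`), together with the operations used in the statements.
-/

/-- The variables `t^α_d`, `x` and `ε`. -/
inductive BVar (N : ℕ) : Type
  | t : Fin N → ℕ → BVar N
  | x : BVar N
  | e : BVar N
  deriving DecidableEq

/-- The ring `ℂ[[x, t^*_*, ε]]`. -/
abbrev Big (N : ℕ) : Type := MvPowerSeries (BVar N) ℂ

namespace Big

variable {N : ℕ}

/-- Coefficient of a monomial. -/
noncomputable def co (G : Big N) (μ : BVar N →₀ ℕ) : ℂ := MvPowerSeries.coeff (R := ℂ) μ G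

/-- Build a power series from its coefficients. -/
def ofCo (F : (BVar N →₀ ℕ) → ℂ) : Big N := F

/-- Partial derivative with respect to one of the variables. -/
noncomputable def pd (v : BVar N) (G : Big N) : Big N :=
  ofCo fun μ => ((μ v : ℂ) + 1) * co G (μ + Finsupp.single v 1)

/-- `Σ_{α,n} t^α_{n+1} ∂G/∂t^α_n`. -/
noncomputable def stringSum (G : Big N) : Big N :=
  ofCo fun μ => ∑ᶠ p : Fin N × ℕ,
    co (MvPowerSeries.X (BVar.t p.1 (p.2 + 1)) * pd (BVar.t p.1 p.2) G) μ

/-- `Σ_{α,n} t^α_n ∂G/∂t^α_n`. -/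
noncomputable def dilatonSum (G : Big N) : Big N :=
  ofCo fun μ => ∑ᶠ p : Fin N × ℕ,
    co (MvPowerSeries.X (BVar.t p.1 p.2) * pd (BVar.t p.1 p.2) G) μ

/-- `ε ∂G/∂ε`. -/
noncomputable def epsDel (G : Big N) : Big N :=
  ofCo fun μ => (μ BVar.e : ℂ) * co G μ

/-- Independence of `x`. -/
def XFree (G : Big N) : Prop := ∀ μ, co G μ ≠ 0 → μ BVar.x = 0

/-- Containing only even powers of `ε`. -/
def EvenEps (G : Big N) : Prop := ∀ μ, co G μ ≠ 0 → Even (μ BVar.e)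

/-- `½ η_{αβ} t^α_0 t^β_0` (with lowered indices given by the inverse matrix). -/
noncomputable def quadEta (η : Matrix (Fin N) (Fin N) ℂ) : Big N :=
  (2 : ℂ)⁻¹ • ∑ α : Fin N, ∑ β : Fin N,
    η⁻¹ α β • (MvPowerSeries.X (BVar.t α 0) * MvPowerSeries.X (BVar.t β 0))

/-- `ε²`. -/
noncomputable def epsSq : Big N := MvPowerSeries.X (BVar.e) ^ 2

/-- The substitution `t^1_0 ↦ t^1_0 + x` in an `x`-free series. -/
noncomputable def shiftX [NeZero N] (G : Big N) : Big N :=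
  ofCo fun μ =>
    (Nat.choose (μ (BVar.t 0 0) + μ BVar.x) (μ BVar.x) : ℂ) *
      co G (μ.erase BVar.x + Finsupp.single (BVar.t 0 0) (μ BVar.x))

/-- The series `(w^⊤)^α = η^{αμ} (∂²F/∂t^μ_0 ∂t^1_0)|_{t^1_0 ↦ t^1_0 + x}`. -/
noncomputable def wt [NeZero N] (η : Matrix (Fin N) (Fin N) ℂ) (F : Big N)
    (α : Fin N) : Big N :=
  ∑ μ : Fin N, η α μ • shiftX (pd (BVar.t μ 0) (pd (BVar.t 0 0) F))

/-- Evaluation at `x = 0` (the result regarded again as an element of the big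
ring, not involving `x`). -/
noncomputable def evalX0 (G : Big N) : Big N :=
  ofCo fun μ => if μ BVar.x = 0 then co G μ else 0

/-- Total descendent degree of a monomial in the `t`-variables:
`t^{α_1}_{d_1} ⋯ t^{α_n}_{d_n} ↦ d_1 + ⋯ + d_n`. -/
noncomputable def tdeg (μ : BVar N →₀ ℕ) : ℕ :=
  ∑ v ∈ μ.support,
    (match v with
      | BVar.t _ d => d * μ v
      | _ => 0)

/-- Iterated partial derivative `∂^n/∂t^{α_1}_{d_1}⋯∂t^{α_n}_{d_n}`. -/
noncomputable def dList (L : List (Fin N × ℕ)) (G : Big N) : Big N :=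
  L.foldr (fun p G => pd (BVar.t p.1 p.2) G) G

/-- The value substituted for the variable `u^α_n` (resp. `ε`): the `n`-th
`x`-derivative of the `α`-th component of the given family (resp. `ε`). -/
noncomputable def fac (W : Fin N → Big N) : DVar N → Big N
  | Sum.inl (α, n) => (pd BVar.x)^[n] (W α)
  | Sum.inr _ => MvPowerSeries.X BVar.e

/-- Substitution of a family of power series (and of its `x`-derivatives) into
a differential polynomial: `f(u; u_x, u_{xx}, …)` evaluated at `u^α = W α`. -/
noncomputable def evalDP (f : DP N) (W : Fin N → Big N) : Big N :=
  ofCo fun μ => ∑ᶠ m : DVar N →₀ ℕ,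
    DP.co f m * co (∏ v ∈ m.support, fac W v ^ m v) μ

end Big


namespace Statement15Aux
open Big Finsupp

variable {N : ℕ}

local notation "XV" v => (MvPowerSeries.X v : Big N)

lemma ext_co {G H : Big N} (h : ∀ μ, co G μ = co H μ) : G = H :=
  MvPowerSeries.ext h

lemma co_ofCo (f : (BVar N →₀ ℕ) → ℂ) (μ : BVar N →₀ ℕ) : co (ofCo f) μ = f μ := rfl

lemma co_add (G H : Big N) (μ : BVar N →₀ ℕ) : co (G + H) μ = co G μ + co H μ :=
  map_add _ _ _

lemma co_sub (G H : Big N) (μ : BVar N →₀ ℕ) : co (G - H) μ = co G μ - co H μ :=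
  map_sub _ _ _

lemma co_zero (μ : BVar N →₀ ℕ) : co (0 : Big N) μ = 0 := map_zero _

lemma co_smul (c : ℂ) (G : Big N) (μ : BVar N →₀ ℕ) : co (c • G) μ = c * co G μ := by
  simp [co]

lemma co_one (μ : BVar N →₀ ℕ) : co (1 : Big N) μ = if μ = 0 then 1 else 0 := by
  classical
  simpa [co] using MvPowerSeries.coeff_one (R := ℂ) μ

lemma co_X (v : BVar N) (μ : BVar N →₀ ℕ) :
    co (MvPowerSeries.X v : Big N) μ = if μ = single v 1 then 1 else 0 := by
  classical
  exact MvPowerSeries.coeff_X (R := ℂ) μ v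

lemma co_pd (v : BVar N) (G : Big N) (μ : BVar N →₀ ℕ) :
    co (Big.pd v G) μ = ((μ v : ℂ) + 1) * co G (μ + single v 1) := rfl

lemma co_X_mul (w : BVar N) (H : Big N) (μ : BVar N →₀ ℕ) :
    co ((MvPowerSeries.X w : Big N) * H) μ
      = if single w 1 ≤ μ then co H (μ - single w 1) else 0 := by
  classical
  rw [MvPowerSeries.X_def]
  simpa [co] using MvPowerSeries.coeff_monomial_mul (m := μ) (n := single w 1) (φ := H) (1 : ℂ)

lemma pd_add (v : BVar N) (G H : Big N) : Big.pd v (G + H) = Big.pd v G + Big.pd v H := by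
  refine ext_co fun μ => ?_
  rw [co_add]
  simp only [Big.pd, co_ofCo, co_add]
  ring

lemma pd_smul (v : BVar N) (c : ℂ) (G : Big N) : Big.pd v (c • G) = c • Big.pd v G := by
  refine ext_co fun μ => ?_
  rw [co_smul]
  simp only [Big.pd, co_ofCo, co_smul]
  ring

lemma pd_sub (v : BVar N) (G H : Big N) : Big.pd v (G - H) = Big.pd v G - Big.pd v H := by
  refine ext_co fun μ => ?_
  rw [co_sub]
  simp only [Big.pd, co_ofCo, co_sub]
  ring

lemma pd_zero (v : BVar N) : Big.pd v (0 : Big N) = 0 := by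
  refine ext_co fun μ => ?_
  simp [Big.pd, co_ofCo, co_zero]

lemma pd_one (v : BVar N) : Big.pd v (1 : Big N) = 0 := by
  refine ext_co fun μ => ?_
  simp only [Big.pd, co_ofCo, co_one, co_zero]
  rw [if_neg, mul_zero]
  intro h
  have := DFunLike.congr_fun h v
  simp [single_apply] at this

/-- `pd` as a linear map. -/
noncomputable def pdL (v : BVar N) : Big N →ₗ[ℂ] Big N where
  toFun := Big.pd v
  map_add' := pd_add v
  map_smul' := pd_smul v

@[simp] lemma pdL_apply (v : BVar N) (G : Big N) : pdL v G = Big.pd v G := rfl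

lemma pd_comm (v w : BVar N) (G : Big N) :
    Big.pd v (Big.pd w G) = Big.pd w (Big.pd v G) := by
  classical
  by_cases hvw : v = w
  · subst hvw; rfl
  · refine ext_co fun μ => ?_
    simp only [Big.pd, co_ofCo]
    rw [Finsupp.add_apply, Finsupp.add_apply, single_apply, single_apply,
      if_neg hvw, if_neg (Ne.symm hvw)]
    rw [add_right_comm]
    push_cast
    ring

lemma pd_X (v w : BVar N) :
    Big.pd v (MvPowerSeries.X w : Big N) = if v = w then 1 else 0 := by
  classical
  refine ext_co fun μ => ?_
  simp only [Big.pd, co_ofCo, co_X]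
  by_cases hvw : v = w
  · subst hvw
    rw [if_pos rfl]
    by_cases hμ : μ = 0
    · subst hμ; simp [co_one]
    · rw [if_neg, co_one, if_neg hμ, mul_zero]
      intro h
      apply hμ
      have : μ + single v 1 - single v 1 = single v 1 - single v 1 := by rw [h]
      simpa using this
  · rw [if_neg hvw, co_zero, if_neg, mul_zero]
    intro h
    have := DFunLike.congr_fun h v
    rw [Finsupp.add_apply, single_eq_same, single_eq_of_ne' (Ne.symm hvw)] at this
    omega

lemma pd_X_mul {v w : BVar N} (hvw : v ≠ w) (H : Big N) :
    Big.pd v ((MvPowerSeries.X w : Big N) * H)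
      = (MvPowerSeries.X w : Big N) * Big.pd v H := by
  classical
  refine ext_co fun μ => ?_
  rw [co_pd, co_X_mul, co_X_mul]
  have hcond : single w 1 ≤ μ + single v 1 ↔ single w 1 ≤ μ := by
    simp only [single_le_iff, Finsupp.add_apply, single_apply, if_neg hvw, add_zero]
  by_cases h : single w 1 ≤ μ
  · rw [if_pos (hcond.mpr h), if_pos h, co_pd]
    have harg : μ + single v 1 - single w 1 = μ - single w 1 + single v 1 := by
      ext a
      simp only [Finsupp.tsub_apply, Finsupp.add_apply, single_apply]
      split_ifs with h1 h2 <;> first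
        | exact absurd (h1.trans h2.symm) hvw
        | omega
    have hval : (μ - single w 1 : BVar N →₀ ℕ) v = μ v := by
      rw [Finsupp.tsub_apply, single_eq_of_ne' (Ne.symm hvw), Nat.sub_zero]
    rw [harg, hval]
  · rw [if_neg (fun hc => h (hcond.mp hc)), if_neg h, mul_zero]

end Statement15Aux
namespace Statement15Aux
open Big Finsupp

variable {N : ℕ}

/-- Decode a variable of the form `t γ (m+1)`. -/
def tvar? : BVar N → Option (Fin N × ℕ)
  | BVar.t γ (m + 1) => some (γ, m)
  | _ => none

lemma tvar?_eq_some {v : BVar N} {p : Fin N × ℕ} :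
    tvar? v = some p ↔ v = BVar.t p.1 (p.2 + 1) := by
  cases v with
  | t γ m =>
    cases m with
    | zero => simp [tvar?]
    | succ m =>
      simp only [tvar?, Option.some.injEq, BVar.t.injEq]
      constructor
      · rintro rfl; simp
      · rintro ⟨rfl, h⟩
        obtain rfl : m = p.2 := by omega
        rfl
  | x => simp [tvar?]
  | e => simp [tvar?]

/-- The finite set of relevant summation indices for `stringSum` at `μ`. -/
noncomputable def TT (μ : BVar N →₀ ℕ) : Finset (Fin N × ℕ) :=
  μ.support.biUnion fun v => (tvar? v).toFinset

lemma mem_TT {μ : BVar N →₀ ℕ} {p : Fin N × ℕ} :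
    p ∈ TT μ ↔ μ (BVar.t p.1 (p.2 + 1)) ≠ 0 := by
  constructor
  · intro h
    rw [TT, Finset.mem_biUnion] at h
    obtain ⟨v, hv, hp⟩ := h
    rw [Option.mem_toFinset, Option.mem_def, tvar?_eq_some] at hp
    subst hp
    exact Finsupp.mem_support_iff.mp hv
  · intro h
    rw [TT, Finset.mem_biUnion]
    exact ⟨BVar.t p.1 (p.2 + 1), Finsupp.mem_support_iff.mpr h,
      Option.mem_toFinset.mpr (tvar?_eq_some.mpr rfl)⟩

/-- Individual term of `stringSum`. -/
noncomputable def sTerm (G : Big N) (μ : BVar N →₀ ℕ) (p : Fin N × ℕ) : ℂ :=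
  co ((MvPowerSeries.X (BVar.t p.1 (p.2 + 1)) : Big N) * Big.pd (BVar.t p.1 p.2) G) μ

lemma co_stringSum (G : Big N) (μ : BVar N →₀ ℕ) :
    co (stringSum G) μ = ∑ p ∈ TT μ, sTerm G μ p := by
  have : co (stringSum G) μ = ∑ᶠ p : Fin N × ℕ, sTerm G μ p := rfl
  rw [this]
  refine finsum_eq_sum_of_support_subset _ fun p hp => ?_
  rw [Function.mem_support] at hp
  rw [Finset.mem_coe, mem_TT]
  intro h0
  apply hp
  rw [sTerm, co_X_mul, if_neg]
  rw [single_le_iff, h0]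
  omega

lemma stringSum_add (G H : Big N) : stringSum (G + H) = stringSum G + stringSum H := by
  refine ext_co fun μ => ?_
  rw [co_add, co_stringSum, co_stringSum, co_stringSum, ← Finset.sum_add_distrib]
  refine Finset.sum_congr rfl fun p _ => ?_
  rw [sTerm, sTerm, sTerm, pd_add, mul_add, co_add]

lemma stringSum_smul (c : ℂ) (G : Big N) : stringSum (c • G) = c • stringSum G := by
  refine ext_co fun μ => ?_
  rw [co_smul, co_stringSum, co_stringSum, Finset.mul_sum]
  refine Finset.sum_congr rfl fun p _ => ?_
  rw [sTerm, sTerm, pd_smul, mul_smul_comm, co_smul]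

/-- `stringSum` as a linear map. -/
noncomputable def stringSumL : Big N →ₗ[ℂ] Big N where
  toFun := stringSum
  map_add' := stringSum_add
  map_smul' := stringSum_smul

@[simp] lemma stringSumL_apply (G : Big N) : stringSumL G = stringSum G := rfl

lemma stringSum_zero : stringSum (0 : Big N) = 0 := map_zero stringSumL

lemma stringSum_sub (G H : Big N) : stringSum (G - H) = stringSum G - stringSum H :=
  map_sub stringSumL G H

lemma stringSum_one : stringSum (1 : Big N) = 0 := by
  refine ext_co fun μ => ?_
  rw [co_stringSum, co_zero]
  refine Finset.sum_eq_zero fun p _ => ?_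
  rw [sTerm, pd_one, MulZeroClass.mul_zero, co_zero]

lemma tvar?_none {v : BVar N} (hv : ∀ γ m, v ≠ BVar.t γ (m + 1)) : tvar? v = none := by
  cases h : tvar? v with
  | none => rfl
  | some p => exact absurd (tvar?_eq_some.mp h) (hv p.1 p.2)

lemma TT_add_single {v : BVar N} (hv : ∀ γ m, v ≠ BVar.t γ (m + 1)) (μ : BVar N →₀ ℕ) :
    TT (μ + single v 1) = TT μ := by
  ext p
  rw [mem_TT, mem_TT, Finsupp.add_apply, single_eq_of_ne' (hv p.1 p.2), add_zero]

lemma pd_stringSum {v : BVar N} (hv : ∀ γ m, v ≠ BVar.t γ (m + 1)) (G : Big N) :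
    Big.pd v (stringSum G) = stringSum (Big.pd v G) := by
  refine ext_co fun μ => ?_
  rw [co_pd, co_stringSum, co_stringSum, TT_add_single hv, Finset.mul_sum]
  refine Finset.sum_congr rfl fun p _ => ?_
  rw [sTerm, sTerm, pd_comm (BVar.t p.1 p.2) v, ← pd_X_mul (hv p.1 p.2), co_pd]

lemma stringSum_X (γ : Fin N) (m : ℕ) :
    stringSum (MvPowerSeries.X (BVar.t γ m) : Big N)
      = MvPowerSeries.X (BVar.t γ (m + 1)) := by
  classical
  refine ext_co fun μ => ?_
  rw [co_stringSum]
  have hterm : ∀ p ∈ TT μ, sTerm (MvPowerSeries.X (BVar.t γ m) : Big N) μ p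
      = if p = (γ, m) then co (MvPowerSeries.X (BVar.t γ (m + 1)) : Big N) μ else 0 := by
    intro p _
    rw [sTerm, pd_X]
    by_cases hp : p = (γ, m)
    · subst hp
      rw [if_pos rfl, if_pos rfl, mul_one]
    · rw [if_neg, MulZeroClass.mul_zero, co_zero, if_neg hp]
      intro h
      apply hp
      rw [BVar.t.injEq] at h
      exact Prod.ext h.1 h.2
  rw [Finset.sum_congr rfl hterm, Finset.sum_ite_eq' (TT μ) (γ, m)]
  by_cases hm : (γ, m) ∈ TT μ
  · rw [if_pos hm]
  · rw [if_neg hm, eq_comm, co_X, if_neg]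
    intro hμ
    apply hm
    rw [mem_TT, hμ, single_eq_same]
    omega

lemma stringSum_iter_X (n : ℕ) (γ : Fin N) (m : ℕ) :
    stringSum^[n] (MvPowerSeries.X (BVar.t γ m) : Big N)
      = MvPowerSeries.X (BVar.t γ (m + n)) := by
  induction n generalizing m with
  | zero => rfl
  | succ n ih =>
    rw [Function.iterate_succ_apply, stringSum_X, ih]
    ring_nf

end Statement15Aux
namespace Statement15Aux
open Big Finsupp

variable {N : ℕ}

lemma co_sum {ι : Type*} (s : Finset ι) (f : ι → Big N) (μ : BVar N →₀ ℕ) :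
    co (∑ i ∈ s, f i) μ = ∑ i ∈ s, co (f i) μ := by
  simp [co]

/-! ### Preservation of `XFree` -/

lemma XFree_zero : XFree (0 : Big N) := fun μ h => absurd (co_zero μ) h

lemma XFree_one : XFree (1 : Big N) := by
  intro μ h
  rw [co_one] at h
  by_cases hμ : μ = 0
  · subst hμ; rfl
  · rw [if_neg hμ] at h; exact absurd rfl h

lemma XFree_add {G H : Big N} (hG : XFree G) (hH : XFree H) : XFree (G + H) := by
  intro μ h
  rw [co_add] at h
  by_cases h1 : co G μ = 0
  · exact hH μ fun h2 => h (by rw [h1, h2, add_zero])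
  · exact hG μ h1

lemma XFree_smul (c : ℂ) {G : Big N} (hG : XFree G) : XFree (c • G) := by
  intro μ h
  rw [co_smul] at h
  exact hG μ (right_ne_zero_of_mul h)

lemma XFree_sum {ι : Type*} {s : Finset ι} {f : ι → Big N}
    (h : ∀ i ∈ s, XFree (f i)) : XFree (∑ i ∈ s, f i) := by
  intro μ hμ
  rw [co_sum] at hμ
  obtain ⟨i, hi, hne⟩ := Finset.exists_ne_zero_of_sum_ne_zero hμ
  exact h i hi μ hne

lemma XFree_X (γ : Fin N) (m : ℕ) : XFree (MvPowerSeries.X (BVar.t γ m) : Big N) := by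
  intro μ h
  rw [co_X] at h
  by_cases hμ : μ = single (BVar.t γ m) 1
  · subst hμ
    exact single_eq_of_ne (by intro h; cases h)
  · rw [if_neg hμ] at h; exact absurd rfl h

lemma XFree_pd {v : BVar N} (hv : v ≠ BVar.x) {G : Big N} (hG : XFree G) :
    XFree (Big.pd v G) := by
  intro μ h
  rw [co_pd] at h
  have h2 := hG _ (right_ne_zero_of_mul h)
  rw [Finsupp.add_apply, single_eq_of_ne' hv, add_zero] at h2
  exact h2

lemma XFree_stringSum {G : Big N} (hG : XFree G) : XFree (stringSum G) := by
  intro μ h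
  rw [co_stringSum] at h
  obtain ⟨p, -, hp⟩ := Finset.exists_ne_zero_of_sum_ne_zero h
  rw [sTerm, co_X_mul] at hp
  by_cases hc : single (BVar.t p.1 (p.2 + 1)) 1 ≤ μ
  · rw [if_pos hc] at hp
    have h2 := XFree_pd (by intro h; cases h) hG _ hp
    rw [Finsupp.tsub_apply, single_eq_of_ne (by intro h; cases h)] at h2
    omega
  · rw [if_neg hc] at hp; exact absurd rfl hp

lemma XFree_stringSum_iter {G : Big N} (hG : XFree G) (k : ℕ) :
    XFree (stringSum^[k] G) := by
  induction k with
  | zero => exact hG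
  | succ k ih => rw [Function.iterate_succ_apply']; exact XFree_stringSum ih

lemma XFree_pd_iter {v : BVar N} (hv : v ≠ BVar.x) {G : Big N} (hG : XFree G) (k : ℕ) :
    XFree ((Big.pd v)^[k] G) := by
  induction k with
  | zero => exact hG
  | succ k ih => rw [Function.iterate_succ_apply']; exact XFree_pd hv ih

/-! ### Preservation of `EvenEps` -/

lemma EvenEps_zero : EvenEps (0 : Big N) := fun μ h => absurd (co_zero μ) h

lemma EvenEps_one : EvenEps (1 : Big N) := by
  intro μ h
  rw [co_one] at h
  by_cases hμ : μ = 0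
  · subst hμ; simp
  · rw [if_neg hμ] at h; exact absurd rfl h

lemma EvenEps_add {G H : Big N} (hG : EvenEps G) (hH : EvenEps H) : EvenEps (G + H) := by
  intro μ h
  rw [co_add] at h
  by_cases h1 : co G μ = 0
  · exact hH μ fun h2 => h (by rw [h1, h2, add_zero])
  · exact hG μ h1

lemma EvenEps_smul (c : ℂ) {G : Big N} (hG : EvenEps G) : EvenEps (c • G) := by
  intro μ h
  rw [co_smul] at h
  exact hG μ (right_ne_zero_of_mul h)

lemma EvenEps_sum {ι : Type*} {s : Finset ι} {f : ι → Big N}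
    (h : ∀ i ∈ s, EvenEps (f i)) : EvenEps (∑ i ∈ s, f i) := by
  intro μ hμ
  rw [co_sum] at hμ
  obtain ⟨i, hi, hne⟩ := Finset.exists_ne_zero_of_sum_ne_zero hμ
  exact h i hi μ hne

lemma EvenEps_X (γ : Fin N) (m : ℕ) : EvenEps (MvPowerSeries.X (BVar.t γ m) : Big N) := by
  intro μ h
  rw [co_X] at h
  by_cases hμ : μ = single (BVar.t γ m) 1
  · subst hμ
    rw [single_eq_of_ne (by intro h; cases h)]
    simp
  · rw [if_neg hμ] at h; exact absurd rfl h

lemma EvenEps_pd {v : BVar N} (hv : v ≠ BVar.e) {G : Big N} (hG : EvenEps G) :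
    EvenEps (Big.pd v G) := by
  intro μ h
  rw [co_pd] at h
  have h2 := hG _ (right_ne_zero_of_mul h)
  rw [Finsupp.add_apply, single_eq_of_ne' hv, add_zero] at h2
  exact h2

lemma EvenEps_stringSum {G : Big N} (hG : EvenEps G) : EvenEps (stringSum G) := by
  intro μ h
  rw [co_stringSum] at h
  obtain ⟨p, -, hp⟩ := Finset.exists_ne_zero_of_sum_ne_zero h
  rw [sTerm, co_X_mul] at hp
  by_cases hc : single (BVar.t p.1 (p.2 + 1)) 1 ≤ μ
  · rw [if_pos hc] at hp
    have h2 := EvenEps_pd (by intro h; cases h) hG _ hp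
    rwa [Finsupp.tsub_apply, single_eq_of_ne (by intro h; cases h), Nat.sub_zero] at h2
  · rw [if_neg hc] at hp; exact absurd rfl hp

lemma EvenEps_stringSum_iter {G : Big N} (hG : EvenEps G) (k : ℕ) :
    EvenEps (stringSum^[k] G) := by
  induction k with
  | zero => exact hG
  | succ k ih => rw [Function.iterate_succ_apply']; exact EvenEps_stringSum ih

/-! ### `tdeg` -/

/-- Weight of a variable. -/
def wv : BVar N → ℕ
  | BVar.t _ d => d
  | _ => 0

lemma tdeg_eq_sum (μ : BVar N →₀ ℕ) : tdeg μ = μ.sum fun v k => wv v * k := by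
  rw [tdeg, Finsupp.sum]
  refine Finset.sum_congr rfl fun v _ => ?_
  cases v <;> simp [wv]

lemma tdeg_add (μ ν : BVar N →₀ ℕ) : tdeg (μ + ν) = tdeg μ + tdeg ν := by
  rw [tdeg_eq_sum, tdeg_eq_sum, tdeg_eq_sum]
  exact Finsupp.sum_add_index' (fun a => by simp) (fun a b c => Nat.mul_add _ _ _)

lemma tdeg_single (v : BVar N) (k : ℕ) : tdeg (single v k) = wv v * k := by
  rw [tdeg_eq_sum]
  exact Finsupp.sum_single_index (by simp)

lemma tdeg_stringSum {d : ℕ} {G : Big N} (hG : ∀ ν, co G ν ≠ 0 → d ≤ tdeg ν) :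
    ∀ μ, co (stringSum G) μ ≠ 0 → d + 1 ≤ tdeg μ := by
  intro μ h
  rw [co_stringSum] at h
  obtain ⟨p, -, hp⟩ := Finset.exists_ne_zero_of_sum_ne_zero h
  rw [sTerm, co_X_mul] at hp
  by_cases hc : single (BVar.t p.1 (p.2 + 1)) 1 ≤ μ
  · rw [if_pos hc, co_pd] at hp
    have h3 := hG _ (right_ne_zero_of_mul hp)
    rw [tdeg_add, tdeg_single] at h3
    have h5 := tsub_add_cancel_of_le hc
    have h4 : tdeg (μ - single (BVar.t p.1 (p.2 + 1)) 1)
        + tdeg (single (BVar.t p.1 (p.2 + 1)) 1) = tdeg μ := by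
      rw [← tdeg_add, h5]
    rw [tdeg_single] at h4
    simp only [wv] at h3 h4
    omega
  · rw [if_neg hc] at hp; exact absurd rfl hp

lemma tdeg_stringSum_iter {G : Big N} :
    ∀ (k : ℕ) {d : ℕ}, (∀ ν, co G ν ≠ 0 → d ≤ tdeg ν) →
      ∀ μ, co (stringSum^[k] G) μ ≠ 0 → d + k ≤ tdeg μ := by
  intro k
  induction k generalizing G with
  | zero => intro d hG μ h; simpa using hG μ h
  | succ k ih =>
    intro d hG μ h
    rw [Function.iterate_succ_apply] at h
    have := ih (G := stringSum G) (tdeg_stringSum hG) μ h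
    omega

end Statement15Aux
namespace Statement15Aux
open Big Finsupp

variable {N : ℕ} [NeZero N]

lemma choose_aux1 (a b : ℕ) :
    (a + 1) * (a + 1 + b).choose b = (a + b + 1) * (a + b).choose b := by
  have h1 : (a + 1 + b).choose b = (a + 1 + b).choose (a + 1) := by
    have h := Nat.choose_symm (n := a + 1 + b) (k := b) (by omega)
    rw [show a + 1 + b - b = a + 1 by omega] at h
    exact h.symm
  have h2 := Nat.add_one_mul_choose_eq (a + b) a
  have h3 : (a + b).choose a = (a + b).choose b := by
    have h := Nat.choose_symm (n := a + b) (k := a) (by omega)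
    rw [show a + b - a = b by omega] at h
    exact h.symm
  rw [h3] at h2
  rw [h1, show a + 1 + b = a + b + 1 by omega]
  exact (mul_comm _ _).trans h2.symm

lemma choose_aux2 (a b : ℕ) :
    (b + 1) * (a + b + 1).choose (b + 1) = (a + b + 1) * (a + b).choose b := by
  have h2 := Nat.add_one_mul_choose_eq (a + b) b
  exact (mul_comm _ _).trans h2.symm

lemma co_shiftX (G : Big N) (μ : BVar N →₀ ℕ) :
    co (shiftX G) μ = (Nat.choose (μ (BVar.t 0 0) + μ BVar.x) (μ BVar.x) : ℂ) *
      co G (μ.erase BVar.x + single (BVar.t 0 0) (μ BVar.x)) := rfl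

lemma co_evalX0 (G : Big N) (μ : BVar N →₀ ℕ) :
    co (evalX0 G) μ = if μ BVar.x = 0 then co G μ else 0 := rfl

lemma shiftX_add (G H : Big N) : shiftX (G + H) = shiftX G + shiftX H := by
  refine ext_co fun μ => ?_
  rw [co_add, co_shiftX, co_shiftX, co_shiftX, co_add]
  ring

lemma shiftX_smul (c : ℂ) (G : Big N) : shiftX (c • G) = c • shiftX G := by
  refine ext_co fun μ => ?_
  rw [co_smul, co_shiftX, co_shiftX, co_smul]
  ring

noncomputable def shiftXL : Big N →ₗ[ℂ] Big N where
  toFun := shiftX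
  map_add' := shiftX_add
  map_smul' := shiftX_smul

@[simp] lemma shiftXL_apply (G : Big N) : shiftXL G = shiftX G := rfl

lemma shiftX_zero : shiftX (0 : Big N) = 0 := map_zero shiftXL

lemma shiftX_sub (G H : Big N) : shiftX (G - H) = shiftX G - shiftX H :=
  map_sub shiftXL G H

lemma erase_x_eq_self {μ : BVar N →₀ ℕ} (h : μ BVar.x = 0) : μ.erase BVar.x = μ := by
  ext a
  by_cases ha : a = BVar.x
  · subst ha; rw [erase_same, h]
  · rw [erase_ne ha]

lemma shiftX_one : shiftX (1 : Big N) = 1 := by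
  refine ext_co fun μ => ?_
  rw [co_shiftX, co_one, co_one]
  by_cases hμ : μ = 0
  · subst hμ
    simp
  · rw [if_neg hμ, if_neg, mul_zero]
    intro h
    apply hμ
    rcases (Finsupp.add_eq_zero_iff _ _).mp h with ⟨h1, h2⟩
    have hx : μ BVar.x = 0 := by
      by_contra hx
      exact hx (by simpa [Finsupp.single_eq_zero] using h2)
    rw [← erase_x_eq_self hx]
    exact h1

lemma pd_shiftX_ne {v : BVar N} (hv1 : v ≠ BVar.t 0 0) (hv2 : v ≠ BVar.x) (G : Big N) :
    Big.pd v (shiftX G) = shiftX (Big.pd v G) := by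
  refine ext_co fun μ => ?_
  rw [co_pd, co_shiftX, co_shiftX, co_pd]
  have h1 : (μ + single v 1 : BVar N →₀ ℕ) (BVar.t 0 0) = μ (BVar.t 0 0) := by
    rw [Finsupp.add_apply, single_eq_of_ne' hv1, add_zero]
  have h2 : (μ + single v 1 : BVar N →₀ ℕ) BVar.x = μ BVar.x := by
    rw [Finsupp.add_apply, single_eq_of_ne' hv2, add_zero]
  have harg : (μ + single v 1).erase BVar.x + single (BVar.t 0 0) (μ BVar.x)
      = μ.erase BVar.x + single (BVar.t 0 0) (μ BVar.x) + single v 1 := by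
    rw [erase_add, erase_single_ne (Ne.symm hv2)]
    abel
  have hval : (μ.erase BVar.x + single (BVar.t 0 0) (μ BVar.x) : BVar N →₀ ℕ) v = μ v := by
    rw [Finsupp.add_apply, erase_ne hv2, single_eq_of_ne' (Ne.symm hv1), add_zero]
  rw [h1, h2, harg, hval]
  ring

lemma pd_t00_shiftX (G : Big N) :
    Big.pd (BVar.t 0 0) (shiftX G) = shiftX (Big.pd (BVar.t 0 0) G) := by
  refine ext_co fun μ => ?_
  rw [co_pd, co_shiftX, co_shiftX, co_pd]
  set a := μ (BVar.t 0 0) with ha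
  set b := μ BVar.x with hb
  have h1 : (μ + single (BVar.t 0 0) 1 : BVar N →₀ ℕ) (BVar.t 0 0) = a + 1 := by
    rw [Finsupp.add_apply, single_eq_same]
  have h2 : (μ + single (BVar.t 0 0) 1 : BVar N →₀ ℕ) BVar.x = b := by
    rw [Finsupp.add_apply, single_eq_of_ne (by intro h; cases h), add_zero]
  have harg : (μ + single (BVar.t 0 0) 1).erase BVar.x + single (BVar.t 0 0) b
      = μ.erase BVar.x + single (BVar.t 0 0) b + single (BVar.t 0 0) 1 := by
    rw [erase_add, erase_single_ne (by intro h; cases h)]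
    abel
  have hval : (μ.erase BVar.x + single (BVar.t 0 0) b : BVar N →₀ ℕ) (BVar.t 0 0) = a + b := by
    rw [Finsupp.add_apply, erase_ne (by intro h; cases h), single_eq_same, ha]
  have hc := congrArg (Nat.cast : ℕ → ℂ) (choose_aux1 a b)
  push_cast at hc
  rw [h1, h2, harg, hval]
  push_cast
  linear_combination hc * co G (μ.erase BVar.x + single (BVar.t 0 0) b + single (BVar.t 0 0) 1)

lemma pd_x_shiftX (G : Big N) :
    Big.pd BVar.x (shiftX G) = shiftX (Big.pd (BVar.t 0 0) G) := by
  refine ext_co fun μ => ?_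
  rw [co_pd, co_shiftX, co_shiftX, co_pd]
  set a := μ (BVar.t 0 0) with ha
  set b := μ BVar.x with hb
  have h1 : (μ + single BVar.x 1 : BVar N →₀ ℕ) (BVar.t 0 0) = a := by
    rw [Finsupp.add_apply, single_eq_of_ne (by intro h; cases h), add_zero]
  have h2 : (μ + single BVar.x 1 : BVar N →₀ ℕ) BVar.x = b + 1 := by
    rw [Finsupp.add_apply, single_eq_same]
  have harg : (μ + single BVar.x 1).erase BVar.x + single (BVar.t 0 0) (b + 1)
      = μ.erase BVar.x + single (BVar.t 0 0) b + single (BVar.t 0 0) 1 := by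
    rw [erase_add, erase_single, add_zero, single_add]
    abel
  have hval : (μ.erase BVar.x + single (BVar.t 0 0) b : BVar N →₀ ℕ) (BVar.t 0 0) = a + b := by
    rw [Finsupp.add_apply, erase_ne (by intro h; cases h), single_eq_same, ha]
  have hc := congrArg (Nat.cast : ℕ → ℂ) (choose_aux2 a b)
  push_cast at hc
  rw [h1, h2, harg, hval, show a + (b + 1) = a + b + 1 from rfl]
  push_cast
  linear_combination hc * co G (μ.erase BVar.x + single (BVar.t 0 0) b + single (BVar.t 0 0) 1)

lemma pd_t_shiftX (γ : Fin N) (m : ℕ) (G : Big N) :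
    Big.pd (BVar.t γ m) (shiftX G) = shiftX (Big.pd (BVar.t γ m) G) := by
  by_cases h : BVar.t γ m = BVar.t (0 : Fin N) 0
  · rw [h]; exact pd_t00_shiftX G
  · exact pd_shiftX_ne h (by intro hh; cases hh) G

lemma pdx_iter_shiftX (n : ℕ) (G : Big N) :
    (Big.pd BVar.x)^[n] (shiftX G) = shiftX ((Big.pd (BVar.t 0 0))^[n] G) := by
  induction n generalizing G with
  | zero => rfl
  | succ n ih =>
    rw [Function.iterate_succ_apply, pd_x_shiftX, ih, Function.iterate_succ_apply]

lemma X_mul_shiftX {w : BVar N} (hw1 : w ≠ BVar.t 0 0) (hw2 : w ≠ BVar.x) (G : Big N) :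
    (MvPowerSeries.X w : Big N) * shiftX G = shiftX ((MvPowerSeries.X w : Big N) * G) := by
  refine ext_co fun μ => ?_
  conv_rhs => rw [co_shiftX, co_X_mul]
  rw [co_X_mul]
  set a := μ (BVar.t 0 0) with ha
  set b := μ BVar.x with hb
  have hcond : single w 1 ≤ μ.erase BVar.x + single (BVar.t 0 0) b ↔ single w 1 ≤ μ := by
    rw [single_le_iff, single_le_iff, Finsupp.add_apply, erase_ne hw2,
      single_eq_of_ne' (Ne.symm hw1), add_zero]
  by_cases h : single w 1 ≤ μ
  · rw [if_pos h, if_pos (hcond.mpr h), co_shiftX]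
    have hw : 1 ≤ μ w := single_le_iff.mp h
    have h1 : (μ - single w 1 : BVar N →₀ ℕ) (BVar.t 0 0) = a := by
      rw [Finsupp.tsub_apply, single_eq_of_ne' hw1, Nat.sub_zero]
    have h2 : (μ - single w 1 : BVar N →₀ ℕ) BVar.x = b := by
      rw [Finsupp.tsub_apply, single_eq_of_ne' hw2, Nat.sub_zero]
    have harg : (μ - single w 1).erase BVar.x + single (BVar.t 0 0) b
        = μ.erase BVar.x + single (BVar.t 0 0) b - single w 1 := by
      ext c
      by_cases hcx : c = BVar.x
      · subst hcx
        rw [Finsupp.add_apply, erase_same, Finsupp.tsub_apply, Finsupp.add_apply, erase_same,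
          single_eq_of_ne' (show BVar.t (0 : Fin N) 0 ≠ BVar.x by intro hh; cases hh),
          single_eq_of_ne' hw2]
        omega
      · rw [Finsupp.add_apply, erase_ne hcx, Finsupp.tsub_apply, Finsupp.tsub_apply,
          Finsupp.add_apply, erase_ne hcx]
        by_cases hcw : c = w
        · subst hcw
          rw [single_eq_of_ne' (Ne.symm hw1)]
          omega
        · rw [single_eq_of_ne' fun hh => hcw hh.symm]
          omega
    rw [h1, h2, harg]
  · rw [if_neg h, if_neg (fun hc => h (hcond.mp hc)), mul_zero]

lemma TT_shift (μ : BVar N →₀ ℕ) :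
    TT (μ.erase BVar.x + single (BVar.t 0 0) (μ BVar.x)) = TT μ := by
  ext p
  rw [mem_TT, mem_TT, Finsupp.add_apply, erase_ne (by intro h; cases h),
    single_eq_of_ne' (by intro h; rw [BVar.t.injEq] at h; exact Nat.succ_ne_zero p.2 h.2.symm),
    add_zero]

lemma stringSum_shiftX (G : Big N) : stringSum (shiftX G) = shiftX (stringSum G) := by
  refine ext_co fun μ => ?_
  rw [co_stringSum, co_shiftX, co_stringSum, Finset.mul_sum, ← TT_shift μ]
  refine Finset.sum_congr rfl fun p _ => ?_
  rw [sTerm, sTerm, pd_t_shiftX,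
    X_mul_shiftX (by intro h; rw [BVar.t.injEq] at h; exact Nat.succ_ne_zero p.2 h.2)
      (by intro h; cases h), co_shiftX]

lemma evalX0_shiftX {G : Big N} (hG : XFree G) : evalX0 (shiftX G) = G := by
  refine ext_co fun μ => ?_
  rw [co_evalX0, co_shiftX]
  by_cases hx : μ BVar.x = 0
  · rw [if_pos hx]
    simp [hx, erase_x_eq_self hx]
  · rw [if_neg hx]
    rcases eq_or_ne (co G μ) 0 with h | h
    · rw [h]
    · exact absurd (hG μ h) hx

end Statement15Aux
namespace Statement15Aux
open Big Finsupp

variable {N : ℕ}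

lemma pd_finsetSum (v : BVar N) {ι : Type*} (s : Finset ι) (f : ι → Big N) :
    Big.pd v (∑ i ∈ s, f i) = ∑ i ∈ s, Big.pd v (f i) :=
  map_sum (pdL v) f s

lemma stringSum_finsetSum {ι : Type*} (s : Finset ι) (f : ι → Big N) :
    stringSum (∑ i ∈ s, f i) = ∑ i ∈ s, stringSum (f i) :=
  map_sum stringSumL f s

lemma co_XX (a b : BVar N) (μ : BVar N →₀ ℕ) :
    co ((MvPowerSeries.X a : Big N) * MvPowerSeries.X b) μ
      = if μ = single a 1 + single b 1 then 1 else 0 := by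
  classical
  rw [MvPowerSeries.X_def, MvPowerSeries.X_def, MvPowerSeries.monomial_mul_monomial, one_mul]
  exact MvPowerSeries.coeff_monomial μ _ _

lemma pd_XX (v a b : BVar N) :
    Big.pd v ((MvPowerSeries.X a : Big N) * MvPowerSeries.X b)
      = (if v = a then (MvPowerSeries.X b : Big N) else 0)
        + (if v = b then (MvPowerSeries.X a : Big N) else 0) := by
  classical
  by_cases hva : v = a
  · subst hva
    by_cases hvb : v = b
    · subst hvb
      rw [if_pos rfl]
      refine ext_co fun μ => ?_
      rw [co_pd, co_XX, co_add, co_X]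
      by_cases hμ : μ = single v 1
      · subst hμ
        rw [if_pos rfl, if_pos rfl, single_eq_same]
        norm_num
      · rw [if_neg, if_neg hμ, mul_zero, add_zero]
        intro h
        exact hμ (add_right_cancel h)
    · rw [if_pos rfl, if_neg hvb, add_zero, mul_comm]
      rw [pd_X_mul (fun h => hvb h), pd_X, if_pos rfl, mul_one]
  · rw [if_neg hva, zero_add, pd_X_mul (fun h => hva h), pd_X]
    by_cases hvb : v = b
    · rw [if_pos hvb, if_pos hvb, mul_one]
    · rw [if_neg hvb, if_neg hvb, MulZeroClass.mul_zero]

lemma co_epsSq (μ : BVar N →₀ ℕ) :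
    co (epsSq : Big N) μ = if μ = single BVar.e 2 then 1 else 0 := by
  classical
  exact MvPowerSeries.coeff_X_pow (R := ℂ) μ BVar.e 2

lemma pd_t_epsSq (ν : Fin N) (m : ℕ) : Big.pd (BVar.t ν m) (epsSq : Big N) = 0 := by
  classical
  refine ext_co fun μ => ?_
  rw [co_pd, co_epsSq, co_zero, if_neg, mul_zero]
  intro h
  have := DFunLike.congr_fun h (BVar.t ν m)
  rw [Finsupp.add_apply, single_eq_same, single_eq_of_ne (by intro hh; cases hh)] at this
  omega

lemma smul_ite0 (c : ℂ) (P : Prop) [Decidable P] (A : Big N) :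
    c • (if P then A else 0) = if P then c • A else 0 := by
  split_ifs <;> simp

lemma pd_quadEta {η : Matrix (Fin N) (Fin N) ℂ} (hs : ∀ i j, η⁻¹ i j = η⁻¹ j i) (ν : Fin N) :
    Big.pd (BVar.t ν 0) (quadEta η)
      = ∑ β : Fin N, η⁻¹ ν β • (MvPowerSeries.X (BVar.t β 0) : Big N) := by
  classical
  rw [quadEta, pd_smul, pd_finsetSum]
  have hterm : ∀ α : Fin N,
      Big.pd (BVar.t ν 0) (∑ β : Fin N, η⁻¹ α β
          • (MvPowerSeries.X (BVar.t α 0) * MvPowerSeries.X (BVar.t β 0) : Big N))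
        = ∑ β : Fin N,
            ((if ν = α then η⁻¹ α β • (MvPowerSeries.X (BVar.t β 0) : Big N) else 0)
              + (if ν = β then η⁻¹ α β • (MvPowerSeries.X (BVar.t α 0) : Big N) else 0)) := by
    intro α
    rw [pd_finsetSum]
    refine Finset.sum_congr rfl fun β _ => ?_
    have e1 : (BVar.t ν 0 = BVar.t α 0) = (ν = α) := by simp [BVar.t.injEq]
    have e2 : (BVar.t ν 0 = BVar.t β 0) = (ν = β) := by simp [BVar.t.injEq]
    rw [pd_smul, pd_XX]
    simp only [e1, e2, smul_add, smul_ite0]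
  simp only [hterm]
  have hsplit : (∑ α : Fin N, ∑ β : Fin N,
      ((if ν = α then η⁻¹ α β • (MvPowerSeries.X (BVar.t β 0) : Big N) else 0)
        + (if ν = β then η⁻¹ α β • (MvPowerSeries.X (BVar.t α 0) : Big N) else 0)))
      = (∑ α : Fin N, ∑ β : Fin N,
          (if ν = α then η⁻¹ α β • (MvPowerSeries.X (BVar.t β 0) : Big N) else 0))
        + (∑ α : Fin N, ∑ β : Fin N,
          (if ν = β then η⁻¹ α β • (MvPowerSeries.X (BVar.t α 0) : Big N) else 0)) := by
    simp [Finset.sum_add_distrib]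
  have hA : (∑ α : Fin N, ∑ β : Fin N,
      (if ν = α then η⁻¹ α β • (MvPowerSeries.X (BVar.t β 0) : Big N) else 0))
      = ∑ β : Fin N, η⁻¹ ν β • (MvPowerSeries.X (BVar.t β 0) : Big N) := by
    rw [Finset.sum_eq_single ν]
    · exact Finset.sum_congr rfl fun β _ => if_pos rfl
    · intro α _ hα
      exact Finset.sum_eq_zero fun β _ => if_neg fun h => hα h.symm
    · intro h; exact absurd (Finset.mem_univ ν) h
  have hB : (∑ α : Fin N, ∑ β : Fin N,
      (if ν = β then η⁻¹ α β • (MvPowerSeries.X (BVar.t α 0) : Big N) else 0))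
      = ∑ α : Fin N, η⁻¹ ν α • (MvPowerSeries.X (BVar.t α 0) : Big N) := by
    refine Finset.sum_congr rfl fun α _ => ?_
    rw [Finset.sum_ite_eq, if_pos (Finset.mem_univ ν), hs α ν]
  rw [hsplit, hA, hB, ← two_smul ℂ, smul_smul]
  norm_num

lemma inv_symm {η : Matrix (Fin N) (Fin N) ℂ} (hsym : η.IsSymm) (i j : Fin N) :
    η⁻¹ i j = η⁻¹ j i := by
  have hsymm : η.transpose = η := hsym
  have h : (η⁻¹).transpose = η⁻¹ := by rw [Matrix.transpose_nonsing_inv, hsymm]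
  conv_lhs => rw [← h]
  rw [Matrix.transpose_apply]

end Statement15Aux
namespace Statement15Aux
open Big Finsupp

variable {N : ℕ}

lemma stringSum_iter_add (k : ℕ) (G H : Big N) :
    stringSum^[k] (G + H) = stringSum^[k] G + stringSum^[k] H := by
  induction k generalizing G H with
  | zero => rfl
  | succ k ih => rw [Function.iterate_succ_apply, stringSum_add, ih,
      Function.iterate_succ_apply, Function.iterate_succ_apply]

end Statement15Aux



open Statement15Aux in
open Big in
/-- properties of the topological series `w^⊤`.  Let `η` be
symmetric nondegenerate and let `F ∈ ℂ[[t^*_*, ε]]` contain only even powers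
of `ε` and satisfy the string equation with constant term `ε²c₁`.  Let
`(w^⊤)^α_n := ∂_x^n ((η^{αμ}∂²F/∂t^μ_0∂t^1_0)|_{t^1_0 ↦ t^1_0 + x})`.  Then:
(i) `O_str (w^⊤)^α_n = δ_{n,0}δ^{α,1}` where
`O_str = ∂/∂t^1_0 − Σ_{γ,m} t^γ_{m+1}∂/∂t^γ_m`;
(ii) `(w^⊤)^α_n|_{x=0} = t^α_n + δ_{n,1}δ^{α,1} + R^α_n(t^*_*) + O(ε²)` where
the coefficient of every monomial `t^{α_1}_{d_1}⋯t^{α_m}_{d_m}` in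
`R^α_n ∈ ℂ[[t^*_*]]` vanishes unless `d_1 + ⋯ + d_m ≥ n + 1`. -/
theorem statement15 (N : ℕ) [NeZero N] (η : Matrix (Fin N) (Fin N) ℂ)
    (hsym : η.IsSymm) (hnd : IsUnit η.det)
    (F : Big N) (hxF : XFree F) (hev : EvenEps F)
    (c₁ : ℂ)
    (hstring : Big.pd (BVar.t 0 0) F
      = stringSum F + quadEta η + c₁ • epsSq) :
    ∀ (α : Fin N) (n : ℕ),
      (Big.pd (BVar.t 0 0) ((Big.pd BVar.x)^[n] (wt η F α))
          - stringSum ((Big.pd BVar.x)^[n] (wt η F α))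
        = if n = 0 ∧ α = 0 then 1 else 0) ∧
      ∃ R E : Big N,
        (∀ μ, Big.co R μ ≠ 0 → μ BVar.x = 0 ∧ μ BVar.e = 0) ∧
        (∀ μ, tdeg μ ≤ n → Big.co R μ = 0) ∧
        (∀ μ, Big.co E μ ≠ 0 → 2 ≤ μ BVar.e) ∧
        evalX0 ((Big.pd BVar.x)^[n] (wt η F α))
          = MvPowerSeries.X (BVar.t α n)
            + (if n = 1 ∧ α = 0 then 1 else 0) + R + E := by
  classical
  intro α n
  have hv0 : ∀ (γ : Fin N) (m : ℕ), BVar.t (0 : Fin N) 0 ≠ BVar.t γ (m + 1) := by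
    intro γ m h
    rw [BVar.t.injEq] at h
    exact Nat.succ_ne_zero m h.2.symm
  set P : Big N := ∑ μ : Fin N, η α μ • Big.pd (BVar.t μ 0) F with hP
  set W : Big N := ∑ μ : Fin N,
    η α μ • Big.pd (BVar.t μ 0) (Big.pd (BVar.t 0 0) F) with hW
  -- first derivative of the string equation
  have h1 : ∀ μ' : Fin N, Big.pd (BVar.t μ' 0) (Big.pd (BVar.t 0 0) F)
      = stringSum (Big.pd (BVar.t μ' 0) F)
        + ∑ β : Fin N, η⁻¹ μ' β • (MvPowerSeries.X (BVar.t β 0) : Big N) := by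
    intro μ'
    have hv : ∀ (γ : Fin N) (m : ℕ), BVar.t μ' 0 ≠ BVar.t γ (m + 1) := by
      intro γ m h
      rw [BVar.t.injEq] at h
      exact Nat.succ_ne_zero m h.2.symm
    rw [hstring, pd_add, pd_add, pd_stringSum hv, pd_quadEta (inv_symm hsym) μ',
      pd_smul, pd_t_epsSq, smul_zero, add_zero]
  have h2 : (∑ μ' : Fin N, η α μ' • stringSum (Big.pd (BVar.t μ' 0) F)) = stringSum P := by
    rw [hP, stringSum_finsetSum]
    exact Finset.sum_congr rfl fun μ' _ => (stringSum_smul _ _).symm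
  have h3 : (∑ μ' : Fin N, η α μ'
        • ∑ β : Fin N, η⁻¹ μ' β • (MvPowerSeries.X (BVar.t β 0) : Big N))
      = MvPowerSeries.X (BVar.t α 0) := by
    simp only [Finset.smul_sum, smul_smul]
    rw [Finset.sum_comm]
    have hmm : ∀ β : Fin N,
        (∑ μ' : Fin N, (η α μ' * η⁻¹ μ' β) • (MvPowerSeries.X (BVar.t β 0) : Big N))
        = ((η * η⁻¹) α β) • (MvPowerSeries.X (BVar.t β 0) : Big N) := by
      intro β
      rw [← Finset.sum_smul, Matrix.mul_apply]
    simp only [hmm, Matrix.mul_nonsing_inv η hnd, Matrix.one_apply]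
    simp [ite_smul, Finset.sum_ite_eq]
  have hW_eq : W = stringSum P + MvPowerSeries.X (BVar.t α 0) := by
    rw [hW]
    calc (∑ μ' : Fin N, η α μ' • Big.pd (BVar.t μ' 0) (Big.pd (BVar.t 0 0) F))
        = ∑ μ' : Fin N, (η α μ' • stringSum (Big.pd (BVar.t μ' 0) F)
            + η α μ' • ∑ β : Fin N, η⁻¹ μ' β • (MvPowerSeries.X (BVar.t β 0) : Big N)) := by
          refine Finset.sum_congr rfl fun μ' _ => ?_
          rw [h1 μ', smul_add]
      _ = (∑ μ' : Fin N, η α μ' • stringSum (Big.pd (BVar.t μ' 0) F))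
            + ∑ μ' : Fin N, η α μ'
              • ∑ β : Fin N, η⁻¹ μ' β • (MvPowerSeries.X (BVar.t β 0) : Big N) :=
          Finset.sum_add_distrib
      _ = stringSum P + MvPowerSeries.X (BVar.t α 0) := by rw [h2, h3]
  have hW_pd : W = Big.pd (BVar.t 0 0) P := by
    rw [hW, hP, pd_finsetSum]
    refine Finset.sum_congr rfl fun μ' _ => ?_
    rw [pd_smul, pd_comm]
  have h5 : Big.pd (BVar.t 0 0) W = stringSum W + (if α = 0 then (1 : Big N) else 0) := by
    conv_lhs => rw [hW_eq]
    rw [pd_add, pd_stringSum hv0, ← hW_pd, pd_X]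
    congr 1
    exact if_congr (by simp [BVar.t.injEq, eq_comm]) rfl rfl
  have hQ : ∀ m : ℕ, Big.pd (BVar.t 0 0) ((Big.pd (BVar.t 0 0))^[m] W)
      = stringSum ((Big.pd (BVar.t 0 0))^[m] W)
        + (if m = 0 ∧ α = 0 then (1 : Big N) else 0) := by
    intro m
    induction m with
    | zero => simpa using h5
    | succ m ih =>
      have hite : Big.pd (BVar.t (0 : Fin N) 0)
          (if m = 0 ∧ α = 0 then (1 : Big N) else 0) = 0 := by
        split_ifs
        · exact pd_one _
        · exact pd_zero _
      rw [if_neg (fun h => Nat.succ_ne_zero m h.1), add_zero,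
        Function.iterate_succ_apply', ih, pd_add, pd_stringSum hv0, hite, add_zero, ih]
  have hWn : ∀ m : ℕ, (Big.pd (BVar.t 0 0))^[m] W
      = stringSum^[m] W + (if m = 1 ∧ α = 0 then (1 : Big N) else 0) := by
    intro m
    induction m with
    | zero =>
      simp only [Function.iterate_zero_apply]
      rw [if_neg (fun h => absurd h.1 (by omega)), add_zero]
    | succ m ih =>
      rw [Function.iterate_succ_apply', hQ m, ih, stringSum_add,
        ← Function.iterate_succ_apply' stringSum m W]
      have hss : stringSum (if m = 1 ∧ α = 0 then (1 : Big N) else 0) = 0 := by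
        split_ifs
        · exact stringSum_one
        · exact stringSum_zero
      rw [hss, add_zero]
      congr 1
      exact if_congr (by constructor <;> (rintro ⟨h1', h2'⟩; exact ⟨by omega, h2'⟩)) rfl rfl
  -- relating `wt` to `W`
  have hwt : wt η F α = shiftX W := by
    have hsX : shiftX W = ∑ μ' : Fin N,
        η α μ' • shiftX (Big.pd (BVar.t μ' 0) (Big.pd (BVar.t 0 0) F)) := by
      rw [hW]
      calc shiftXL (∑ μ' : Fin N, η α μ' • Big.pd (BVar.t μ' 0) (Big.pd (BVar.t 0 0) F))
          = ∑ μ' : Fin N, shiftXL (η α μ' • Big.pd (BVar.t μ' 0) (Big.pd (BVar.t 0 0) F)) :=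
            map_sum shiftXL _ _
        _ = ∑ μ' : Fin N,
            η α μ' • shiftX (Big.pd (BVar.t μ' 0) (Big.pd (BVar.t 0 0) F)) := by
            refine Finset.sum_congr rfl fun μ' _ => ?_
            rw [shiftXL_apply, shiftX_smul]
    rw [hsX, Big.wt]
  have hiter : (Big.pd BVar.x)^[n] (wt η F α)
      = shiftX ((Big.pd (BVar.t 0 0))^[n] W) := by
    rw [hwt, pdx_iter_shiftX]
  constructor
  · -- part (i)
    rw [hiter, pd_t00_shiftX, stringSum_shiftX, ← shiftX_sub, hQ n, add_sub_cancel_left]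
    split_ifs
    · exact shiftX_one
    · exact shiftX_zero
  · -- part (ii)
    have hXfP : XFree P := by
      rw [hP]
      refine XFree_sum fun μ' _ => XFree_smul _ (XFree_pd (by intro h; cases h) hxF)
    have hEvP : EvenEps P := by
      rw [hP]
      refine EvenEps_sum fun μ' _ => EvenEps_smul _ (EvenEps_pd (by intro h; cases h) hev)
    have hXfR' : XFree (stringSum^[n + 1] P) := XFree_stringSum_iter hXfP (n + 1)
    have hEvR' : EvenEps (stringSum^[n + 1] P) := EvenEps_stringSum_iter hEvP (n + 1)
    have htd : ∀ μ, Big.co (stringSum^[n + 1] P) μ ≠ 0 → n + 1 ≤ tdeg μ := by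
      intro μ h
      simpa using tdeg_stringSum_iter (n + 1) (d := 0) (fun ν _ => Nat.zero_le _) μ h
    have hSn : stringSum^[n] W
        = MvPowerSeries.X (BVar.t α n) + stringSum^[n + 1] P := by
      rw [hW_eq, stringSum_iter_add, ← Function.iterate_succ_apply stringSum n P,
        stringSum_iter_X n α 0, Nat.zero_add]
      exact add_comm _ _
    have hXfW : XFree W := by
      rw [hW_pd]
      exact XFree_pd (by intro h; cases h) hXfP
    have hXfWn : XFree ((Big.pd (BVar.t 0 0))^[n] W) :=
      XFree_pd_iter (by intro h; cases h) hXfW n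
    refine ⟨Big.ofCo (fun μ => if μ BVar.e = 0 then Big.co (stringSum^[n + 1] P) μ else 0),
      Big.ofCo (fun μ => if 2 ≤ μ BVar.e then Big.co (stringSum^[n + 1] P) μ else 0),
      ?_, ?_, ?_, ?_⟩
    · intro μ h
      rw [co_ofCo] at h
      by_cases he : μ BVar.e = 0
      · rw [if_pos he] at h
        exact ⟨hXfR' μ h, he⟩
      · rw [if_neg he] at h
        exact absurd rfl h
    · intro μ hμ
      rw [co_ofCo]
      split_ifs with he
      · by_contra h
        exact absurd (htd μ h) (by omega)
      · rfl
    · intro μ h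
      rw [co_ofCo] at h
      by_cases h2 : 2 ≤ μ BVar.e
      · exact h2
      · rw [if_neg h2] at h
        exact absurd rfl h
    · have hsplit : stringSum^[n + 1] P
          = Big.ofCo (fun μ => if μ BVar.e = 0 then Big.co (stringSum^[n + 1] P) μ else 0)
            + Big.ofCo (fun μ => if 2 ≤ μ BVar.e then Big.co (stringSum^[n + 1] P) μ else 0) := by
        refine ext_co fun μ => ?_
        rw [co_add, co_ofCo, co_ofCo]
        rcases Nat.eq_zero_or_pos (μ BVar.e) with h0 | h1
        · rw [if_pos h0, if_neg (by omega), add_zero]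
        · rw [if_neg (by omega)]
          by_cases h2 : 2 ≤ μ BVar.e
          · rw [if_pos h2, zero_add]
          · rw [if_neg h2, add_zero]
            rcases eq_or_ne (Big.co (stringSum^[n + 1] P) μ) 0 with h | h
            · exact h
            · obtain ⟨k, hk⟩ := hEvR' μ h
              omega
      rw [hiter, evalX0_shiftX hXfWn, hWn n, hSn]
      conv_lhs => rw [hsplit]
      rw [add_right_comm, ← add_assoc]
end
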